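/- arXiv:1406.0947 — 2 statements merged into one kernel-verified Lean document; each statement's English description precedes it below -/
import Mathlib

section
/- The generating function Z(x) = Σ_{n≥0} z(n)xⁿ of the numbers of zigzag stacks satisfies, as formal power series, x²(x−1)Z(x)³ + 2x·Z(x)² − (x+1)·Z(x) + 1 = 0. -/
open PowerSeries

namespace Paper

/-- The arc set of a diagram: a finite set of pairs `(i,j)`. -/
abbrev Arcs := Finset (ℕ × ℕ)

/-- A diagram on `[n] = {1,…,n}`: every arc `(i,j)` satisfies `1 ≤ i < j ≤ n`. -/
def IsDiagram (n : ℕ) (A : Arcs) : Prop :=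
  ∀ p ∈ A, 1 ≤ p.1 ∧ p.1 < p.2 ∧ p.2 ≤ n

/-- Two arcs `p = (i₁,j₁)` and `q = (i₂,j₂)` cross if `i₁ < i₂ < j₁ < j₂`. -/
def Crossing (p q : ℕ × ℕ) : Prop :=
  p.1 < q.1 ∧ q.1 < p.2 ∧ p.2 < q.2

/-- A stack on `[n]`: a diagram with no two crossing arcs. -/
def IsStack (n : ℕ) (A : Arcs) : Prop :=
  IsDiagram n A ∧ ∀ p ∈ A, ∀ q ∈ A, ¬ Crossing p q

/-- Left-degree of vertex `v`: number of arcs `(u,v)` with `u < v`. -/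
def ld (A : Arcs) (v : ℕ) : ℕ := (A.filter fun p => p.2 = v).card

/-- Right-degree of vertex `v`: number of arcs `(v,w)` with `v < w`. -/
def rd (A : Arcs) (v : ℕ) : ℕ := (A.filter fun p => p.1 = v).card

/-- Degree of a vertex. -/
def deg (A : Arcs) (v : ℕ) : ℕ := ld A v + rd A v

/-- A zigzag stack: a stack where every vertex has degree ≤ 2 and no vertex has both
positive left-degree and positive right-degree. -/
def IsZigzag (n : ℕ) (A : Arcs) : Prop :=
  IsStack n A ∧ (∀ v, deg A v ≤ 2) ∧ ∀ v, ¬ (1 ≤ ld A v ∧ 1 ≤ rd A v)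

/-- Adjacency in the underlying graph of a diagram. -/
def adj (A : Arcs) (u v : ℕ) : Prop := (u, v) ∈ A ∨ (v, u) ∈ A

/-- `v` lies in the primary component (connected component of vertex 1). -/
def inPrimary (A : Arcs) (v : ℕ) : Prop := Relation.ReflTransGen (adj A) 1 v

/-- The underlying graph on vertex set `[n]` is connected. -/
def ConnectedOn (n : ℕ) (A : Arcs) : Prop :=
  ∀ u v, 1 ≤ u → u ≤ n → 1 ≤ v → v ≤ n → Relation.ReflTransGen (adj A) u v

/-- Number of stacks on `[n]`. -/
noncomputable def stackCount (n : ℕ) : ℕ := Nat.card {A : Arcs // IsStack n A}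

/-- Number of zigzag stacks on `[n]`. -/
noncomputable def zigzagCount (n : ℕ) : ℕ := Nat.card {A : Arcs // IsZigzag n A}

/-- Number of connected zigzag stacks on `[n]`. -/
noncomputable def connZigzagCount (n : ℕ) : ℕ :=
  Nat.card {A : Arcs // IsZigzag n A ∧ ConnectedOn n A}

/-- The ordinary generating function of the numbers of zigzag stacks. -/
noncomputable def Zgf : PowerSeries ℚ := PowerSeries.mk fun n => (zigzagCount n : ℚ)

/-- The power series variable over ℚ. -/
noncomputable def Xq : PowerSeries ℚ := PowerSeries.X

/-- An `m`-reduced zigzag stack on `[n]`: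
(1) `ld(i) + rd(i+m−1) ≤ 2` for `1 ≤ i ≤ n−m+1` (written additively);
(2) if `1 ≤ i < j ≤ n` with `ld(i) > 0` and `rd(j) > 0` then `j − i ≥ m−1`. -/
def MRed (m n : ℕ) (A : Arcs) : Prop :=
  IsZigzag n A ∧
  (∀ i, 1 ≤ i → i + m ≤ n + 1 → ld A i + rd A (i + m - 1) ≤ 2) ∧
  (∀ i j, 1 ≤ i → i < j → j ≤ n → 0 < ld A i → 0 < rd A j → i + m ≤ j + 1)

/-- An `m`-regular linear stack on `[n]`: every arc has length ≥ m and every vertex has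
degree ≤ 2. -/
def RegLinear (m n : ℕ) (A : Arcs) : Prop :=
  IsStack n A ∧ (∀ p ∈ A, p.1 + m ≤ p.2) ∧ ∀ v, deg A v ≤ 2

/-- Number of `m`-reduced zigzag stacks on `[n]`. -/
noncomputable def zm (m n : ℕ) : ℕ := Nat.card {A : Arcs // MRed m n A}

/-- Number of `m`-regular linear stacks on `[n]`. -/
noncomputable def rmc (m n : ℕ) : ℕ := Nat.card {A : Arcs // RegLinear m n A}

/-- Generating function of `m`-reduced zigzag stacks. -/
noncomputable def Zm (m : ℕ) : PowerSeries ℚ := PowerSeries.mk fun n => (zm m n : ℚ)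

/-- Generating function of `m`-regular linear stacks. -/
noncomputable def Rm (m : ℕ) : PowerSeries ℚ := PowerSeries.mk fun n => (rmc m n : ℚ)

/-- Extended left-degree function used to define boundary types. -/
def extLD (A : Arcs) (l a v : ℕ) : ℕ :=
  if v = 0 then a else if v = l + 1 then 0 else ld A v

/-- Extended right-degree function used to define boundary types. -/
def extRD (A : Arcs) (l b v : ℕ) : ℕ :=
  if v = 0 then 0 else if v = l + 1 then b else rd A v

/-- An `m`-reduced zigzag stack on `[l]` of boundary type `(a,b)`. -/
def BoundaryType (m a b l : ℕ) (A : Arcs) : Prop :=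
  MRed m l A ∧
  (∀ i, i + m ≤ l + 2 → extLD A l a i + extRD A l b (i + m - 1) ≤ 2) ∧
  (∀ i j, i < j → j ≤ l + 1 → 0 < extLD A l a i → 0 < extRD A l b j → i + m ≤ j + 1)

/-- Number of boundary-type-`(a,b)` structures on `[n]`. -/
noncomputable def tc (m a b n : ℕ) : ℕ := Nat.card {A : Arcs // BoundaryType m a b n A}

/-- Generating functions `T_i(x)`; types T₁,…,T₆ correspond to `(a,b)` =
(0,0), (1,0), (1,1), (2,0), (2,1), (2,2). -/
noncomputable def Tgf (m a b : ℕ) : PowerSeries ℚ := PowerSeries.mk fun n => (tc m a b n : ℚ)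

/-- Type G : `m`-reduced zigzag stack with `deg(1) ≤ 1`. -/
def TypeG (m n : ℕ) (A : Arcs) : Prop := MRed m n A ∧ deg A 1 ≤ 1

/-- Type H : `m`-reduced zigzag stack with `deg(1) ≤ 1` and `deg(n) ≤ 1`. -/
def TypeH (m n : ℕ) (A : Arcs) : Prop := MRed m n A ∧ deg A 1 ≤ 1 ∧ deg A n ≤ 1

noncomputable def gcnt (m n : ℕ) : ℕ := Nat.card {A : Arcs // TypeG m n A}
noncomputable def hcnt (m n : ℕ) : ℕ := Nat.card {A : Arcs // TypeH m n A}

/-- Generating function `G(x)`. -/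
noncomputable def Ggf (m : ℕ) : PowerSeries ℚ := PowerSeries.mk fun n => (gcnt m n : ℚ)

/-- Generating function `H(x)`. -/
noncomputable def Hgf (m : ℕ) : PowerSeries ℚ := PowerSeries.mk fun n => (hcnt m n : ℚ)

/-- The reduction map θ_m: replace each arc `(i,j)` by `(i, j−m+1)`. -/
def theta (m : ℕ) (A : Arcs) : Arcs := A.image fun p => (p.1, p.2 - m + 1)

/-- Relabel a structure whose arcs lie in `{c+1, …}` down by `c`. -/
def shiftDown (c : ℕ) (A : Arcs) : Arcs := A.image fun p => (p.1 - c, p.2 - c)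

/-- Conditions (1) and (2) of `m`-reducedness restricted to a set `J` of vertices. -/
def CondOn (m : ℕ) (A : Arcs) (J : Finset ℕ) : Prop :=
  (∀ i, i ∈ J → i + m - 1 ∈ J → ld A i + rd A (i + m - 1) ≤ 2) ∧
  (∀ i j, i ∈ J → j ∈ J → i < j → 0 < ld A i → 0 < rd A j → i + m ≤ j + 1)

/-! ### auxiliary -/

def up (c : ℕ) (A : Arcs) : Arcs := A.image fun p => (p.1 + c, p.2 + c)

lemma up_inj (c : ℕ) : Function.Injective fun p : ℕ × ℕ => (p.1 + c, p.2 + c) := by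
  intro p q h
  simp only [Prod.mk.injEq, Prod.ext_iff] at h ⊢
  omega

lemma mem_up {c : ℕ} {A : Arcs} {p : ℕ × ℕ} :
    p ∈ up c A ↔ ∃ q ∈ A, (q.1 + c, q.2 + c) = p := by
  simp [up]

lemma down_up (c : ℕ) (A : Arcs) : shiftDown c (up c A) = A := by
  unfold shiftDown up
  rw [Finset.image_image]
  have : ((fun p : ℕ × ℕ => (p.1 - c, p.2 - c)) ∘ fun p : ℕ × ℕ => (p.1 + c, p.2 + c)) = id := by
    funext p; simp
  rw [this, Finset.image_id]

lemma up_down (c : ℕ) (A : Arcs) (h : ∀ p ∈ A, c ≤ p.1 ∧ c ≤ p.2) :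
    up c (shiftDown c A) = A := by
  unfold shiftDown up
  rw [Finset.image_image]
  rw [Finset.image_congr (g := id), Finset.image_id]
  intro p hp
  have := h p hp
  simp only [Function.comp_apply, id_eq, Prod.ext_iff]
  constructor <;> omega

lemma ld_up {c v : ℕ} (A : Arcs) (hA : ∀ p ∈ A, 1 ≤ p.2) :
    ld (up c A) v = if c < v then ld A (v - c) else 0 := by
  unfold ld up
  rw [Finset.filter_image, Finset.card_image_of_injective _ (up_inj c)]
  split_ifs with h
  · congr 1
    apply Finset.filter_congr
    intro p hp
    simp only [eq_iff_iff]
    omega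
  · convert Finset.card_empty
    rw [Finset.filter_eq_empty_iff]
    intro p hp
    have := hA p hp
    simp only
    omega

lemma rd_up {c v : ℕ} (A : Arcs) (hA : ∀ p ∈ A, 1 ≤ p.1) :
    rd (up c A) v = if c < v then rd A (v - c) else 0 := by
  unfold rd up
  rw [Finset.filter_image, Finset.card_image_of_injective _ (up_inj c)]
  split_ifs with h
  · congr 1
    apply Finset.filter_congr
    intro p hp
    simp only [eq_iff_iff]
    omega
  · convert Finset.card_empty
    rw [Finset.filter_eq_empty_iff]
    intro p hp
    have := hA p hp
    simp only
    omega

lemma ld_eq_zero {A : Arcs} {v : ℕ} (h : ∀ p ∈ A, p.2 ≠ v) : ld A v = 0 := by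
  unfold ld
  rw [Finset.card_eq_zero, Finset.filter_eq_empty_iff]
  exact fun p hp => h p hp

lemma rd_eq_zero {A : Arcs} {v : ℕ} (h : ∀ p ∈ A, p.1 ≠ v) : rd A v = 0 := by
  unfold rd
  rw [Finset.card_eq_zero, Finset.filter_eq_empty_iff]
  exact fun p hp => h p hp

lemma ld_union {A B : Arcs} (h : Disjoint A B) (v : ℕ) :
    ld (A ∪ B) v = ld A v + ld B v := by
  unfold ld
  rw [Finset.filter_union, Finset.card_union_of_disjoint]
  exact Finset.disjoint_filter_filter h

lemma rd_union {A B : Arcs} (h : Disjoint A B) (v : ℕ) :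
    rd (A ∪ B) v = rd A v + rd B v := by
  unfold rd
  rw [Finset.filter_union, Finset.card_union_of_disjoint]
  exact Finset.disjoint_filter_filter h

lemma ld_insert {A : Arcs} {p : ℕ × ℕ} (h : p ∉ A) (v : ℕ) :
    ld (insert p A) v = (if p.2 = v then 1 else 0) + ld A v := by
  unfold ld
  rw [Finset.filter_insert]
  split_ifs with hv
  · rw [Finset.card_insert_of_notMem (fun hc => h (Finset.mem_of_mem_filter _ hc))]
    omega
  · simp

lemma rd_insert {A : Arcs} {p : ℕ × ℕ} (h : p ∉ A) (v : ℕ) :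
    rd (insert p A) v = (if p.1 = v then 1 else 0) + rd A v := by
  unfold rd
  rw [Finset.filter_insert]
  split_ifs with hv
  · rw [Finset.card_insert_of_notMem (fun hc => h (Finset.mem_of_mem_filter _ hc))]
    omega
  · simp

lemma ld_mono {A B : Arcs} (h : A ⊆ B) (v : ℕ) : ld A v ≤ ld B v :=
  Finset.card_le_card (Finset.filter_subset_filter _ h)

lemma rd_mono {A B : Arcs} (h : A ⊆ B) (v : ℕ) : rd A v ≤ rd B v :=
  Finset.card_le_card (Finset.filter_subset_filter _ h)

lemma finite_class (n : ℕ) (P : Arcs → Prop) (hP : ∀ A, P A → IsDiagram n A) :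
    Finite {A // P A} := by
  let S : Arcs := Finset.Icc 1 n ×ˢ Finset.Icc 1 n
  apply Finite.of_injective (fun x : {A // P A} =>
    (⟨x.1, by
      rw [Finset.mem_powerset]
      intro p hp
      have := hP x.1 x.2 p hp
      simp only [S, Finset.mem_product, Finset.mem_Icc]
      omega⟩ : {B // B ∈ S.powerset}))
  intro a b h
  simpa [Subtype.ext_iff] using h


/-! ## Layer 2 -/

lemma mem_bounds {n : ℕ} {A : Arcs} (h : IsZigzag n A) {p : ℕ × ℕ} (hp : p ∈ A) :
    1 ≤ p.1 ∧ p.1 < p.2 ∧ p.2 ≤ n := h.1.1 p hp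

/-- shifting a zigzag stack up by `c` gives a zigzag structure on `[c+1, n+c]`. -/
lemma up_zigzag {n c : ℕ} {A : Arcs} (h : IsZigzag n A) : IsZigzag (n + c) (up c A) := by
  obtain ⟨⟨hd, hnc⟩, hdeg, hboth⟩ := h
  have h1 : ∀ p ∈ A, 1 ≤ p.1 := fun p hp => (hd p hp).1
  have h2 : ∀ p ∈ A, 1 ≤ p.2 := fun p hp => by have := hd p hp; omega
  refine ⟨⟨?_, ?_⟩, ?_, ?_⟩
  · intro p hp
    obtain ⟨q, hq, rfl⟩ := mem_up.1 hp
    have := hd q hq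
    simp only
    omega
  · intro p hp q hq
    obtain ⟨p', hp', rfl⟩ := mem_up.1 hp
    obtain ⟨q', hq', rfl⟩ := mem_up.1 hq
    intro hc
    obtain ⟨c1, c2, c3⟩ := hc
    simp only at c1 c2 c3
    exact hnc p' hp' q' hq' ⟨by omega, by omega, by omega⟩
  · intro v
    unfold deg
    rw [ld_up A h2, rd_up A h1]
    split_ifs with hv
    · exact hdeg (v - c)
    · simp
  · intro v
    rw [ld_up A h2, rd_up A h1]
    split_ifs with hv
    · exact hboth (v - c)
    · simp

/-- concatenation of zigzag stacks. -/
lemma concat_zigzag {m m' : ℕ} {B C : Arcs} (hB : IsZigzag m B) (hC : IsZigzag m' C) :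
    IsZigzag (m + m') (B ∪ up m C) := by
  have hC' := up_zigzag (c := m) hC
  have hCb : ∀ p ∈ up m C, m + 1 ≤ p.1 ∧ p.1 < p.2 ∧ p.2 ≤ m' + m := by
    intro p hp
    obtain ⟨q, hq, rfl⟩ := mem_up.1 hp
    have := mem_bounds hC hq
    simp only
    omega
  have hBb := fun (p : ℕ × ℕ) (hp : p ∈ B) => mem_bounds hB hp
  have hdisj : Disjoint B (up m C) := by
    rw [Finset.disjoint_left]
    intro p hp hp'
    have := hBb p hp
    have := hCb p hp'
    omega
  have hldC0 : ∀ v, v ≤ m → ld (up m C) v = 0 := fun v hv =>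
    ld_eq_zero (fun p hp => by have := hCb p hp; omega)
  have hrdC0 : ∀ v, v ≤ m → rd (up m C) v = 0 := fun v hv =>
    rd_eq_zero (fun p hp => by have := hCb p hp; omega)
  have hldB0 : ∀ v, m < v → ld B v = 0 := fun v hv =>
    ld_eq_zero (fun p hp => by have := hBb p hp; omega)
  have hrdB0 : ∀ v, m < v → rd B v = 0 := fun v hv =>
    rd_eq_zero (fun p hp => by have := hBb p hp; omega)
  refine ⟨⟨?_, ?_⟩, ?_, ?_⟩
  · intro p hp
    rcases Finset.mem_union.1 hp with hp | hp
    · have := hBb p hp; omega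
    · have := hCb p hp; omega
  · intro p hp q hq hc
    rcases Finset.mem_union.1 hp with hp | hp <;> rcases Finset.mem_union.1 hq with hq | hq
    · exact hB.1.2 p hp q hq hc
    · have := hBb p hp; have := hCb q hq
      obtain ⟨c1, c2, c3⟩ := hc
      omega
    · have := hCb p hp; have := hBb q hq
      obtain ⟨c1, c2, c3⟩ := hc
      omega
    · exact hC'.1.2 p hp q hq hc
  · intro v
    unfold deg
    rw [ld_union hdisj, rd_union hdisj]
    rcases le_or_gt v m with hv | hv
    · rw [hldC0 v hv, hrdC0 v hv]
      have := hB.2.1 v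
      unfold deg at this
      omega
    · rw [hldB0 v hv, hrdB0 v hv]
      have := hC'.2.1 v
      unfold deg at this
      omega
  · intro v
    rw [ld_union hdisj, rd_union hdisj]
    rcases le_or_gt v m with hv | hv
    · rw [hldC0 v hv, hrdC0 v hv]
      simpa using hB.2.2 v
    · rw [hldB0 v hv, hrdB0 v hv]
      simpa using hC'.2.2 v

lemma ld_one_eq_zero {n : ℕ} {A : Arcs} (h : IsZigzag n A) : ld A 1 = 0 :=
  ld_eq_zero (fun p hp => by have := mem_bounds h hp; omega)

/-- inserting an arc `(1,t)`. -/
lemma insert_arc_zigzag {n t : ℕ} {A : Arcs} (hA : IsZigzag n A) (ht1 : 2 ≤ t) (htn : t ≤ n)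
    (hnot : (1, t) ∉ A) (hld : ld A t ≤ 1) (hrd : rd A t = 0) (hrd1 : rd A 1 ≤ 1)
    (hcut : ∀ q ∈ A, q.1 = 1 ∨ q.2 ≤ t ∨ t + 1 ≤ q.1) :
    IsZigzag n (insert (1, t) A) := by
  have hBb := fun (p : ℕ × ℕ) (hp : p ∈ A) => mem_bounds hA hp
  refine ⟨⟨?_, ?_⟩, ?_, ?_⟩
  · intro p hp
    rcases Finset.mem_insert.1 hp with rfl | hp
    · simp only
      omega
    · exact hA.1.1 p hp
  · intro p hp q hq hc
    rcases Finset.mem_insert.1 hp with rfl | hp <;> rcases Finset.mem_insert.1 hq with rfl | hq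
    · obtain ⟨c1, c2, c3⟩ := hc; simp at c1
    · obtain ⟨c1, c2, c3⟩ := hc
      simp only at c1 c2 c3
      rcases hcut q hq with h | h | h <;> omega
    · obtain ⟨c1, c2, c3⟩ := hc
      simp only at c1 c2 c3
      have := hBb p hp
      omega
    · exact hA.1.2 p hp q hq hc
  · intro v
    unfold deg
    rw [ld_insert hnot, rd_insert hnot]
    simp only
    have hd := hA.2.1 v
    unfold deg at hd
    split_ifs with h1 h2 h2
    · omega
    · subst h1
      omega
    · subst h2
      have h0 := ld_one_eq_zero hA
      omega
    · omega
  · intro v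
    rw [ld_insert hnot, rd_insert hnot]
    simp only
    have hb := hA.2.2 v
    split_ifs with h1 h2 h2
    · omega
    · subst h1
      omega
    · subst h2
      have h0 := ld_one_eq_zero hA
      omega
    · omega

/-! down direction : extracting pieces -/

lemma down_inj_on {c : ℕ} {S : Arcs} (h : ∀ p ∈ S, c < p.1 ∧ p.1 < p.2) :
    Set.InjOn (fun p : ℕ × ℕ => (p.1 - c, p.2 - c)) S := by
  intro p hp q hq he
  have := h p hp
  have := h q hq
  simp only [Prod.mk.injEq, Prod.ext_iff] at he ⊢
  omega

lemma ld_down {c v : ℕ} {S : Arcs} (h : ∀ p ∈ S, c < p.1 ∧ p.1 < p.2) :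
    ld (shiftDown c S) v = (S.filter fun p => p.2 = v + c).card := by
  unfold ld shiftDown
  rw [Finset.filter_image, Finset.card_image_of_injOn]
  · congr 1
    apply Finset.filter_congr
    intro p hp
    have := h p hp
    simp only [eq_iff_iff]
    omega
  · exact Set.InjOn.mono (fun p hp => Finset.mem_of_mem_filter p hp) (down_inj_on h)

lemma rd_down {c v : ℕ} {S : Arcs} (h : ∀ p ∈ S, c < p.1 ∧ p.1 < p.2) :
    rd (shiftDown c S) v = (S.filter fun p => p.1 = v + c).card := by
  unfold rd shiftDown
  rw [Finset.filter_image, Finset.card_image_of_injOn]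
  · congr 1
    apply Finset.filter_congr
    intro p hp
    have := h p hp
    simp only [eq_iff_iff]
    omega
  · exact Set.InjOn.mono (fun p hp => Finset.mem_of_mem_filter p hp) (down_inj_on h)

lemma card_filter_le_ld {S A : Arcs} (h : S ⊆ A) (w : ℕ) :
    (S.filter fun p => p.2 = w).card ≤ ld A w :=
  Finset.card_le_card (Finset.filter_subset_filter _ h)

lemma card_filter_le_rd {S A : Arcs} (h : S ⊆ A) (w : ℕ) :
    (S.filter fun p => p.1 = w).card ≤ rd A w :=
  Finset.card_le_card (Finset.filter_subset_filter _ h)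

/-- a piece of a zigzag stack, shifted down, is a zigzag stack. -/
lemma down_zigzag {n c m : ℕ} {A S : Arcs} (hA : IsZigzag n A) (hS : S ⊆ A)
    (hb : ∀ p ∈ S, c + 1 ≤ p.1 ∧ p.2 ≤ c + m) : IsZigzag m (shiftDown c S) := by
  have hbb : ∀ p ∈ S, c < p.1 ∧ p.1 < p.2 := by
    intro p hp
    have := mem_bounds hA (hS hp)
    have := hb p hp
    omega
  have hldle : ∀ v, ld (shiftDown c S) v ≤ ld A (v + c) := by
    intro v
    rw [ld_down hbb]
    exact card_filter_le_ld hS _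
  have hrdle : ∀ v, rd (shiftDown c S) v ≤ rd A (v + c) := by
    intro v
    rw [rd_down hbb]
    exact card_filter_le_rd hS _
  refine ⟨⟨?_, ?_⟩, ?_, ?_⟩
  · intro p hp
    obtain ⟨q, hq, rfl⟩ := Finset.mem_image.1 hp
    have := hbb q hq
    have := hb q hq
    simp only
    omega
  · intro p hp q hq hc
    obtain ⟨p', hp', rfl⟩ := Finset.mem_image.1 hp
    obtain ⟨q', hq', rfl⟩ := Finset.mem_image.1 hq
    have := hbb p' hp'
    have := hbb q' hq'
    obtain ⟨c1, c2, c3⟩ := hc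
    simp only at c1 c2 c3
    exact hA.1.2 p' (hS hp') q' (hS hq') ⟨by omega, by omega, by omega⟩
  · intro v
    have := hA.2.1 (v + c)
    unfold deg at this ⊢
    have := hldle v
    have := hrdle v
    omega
  · intro v
    have := hA.2.2 (v + c)
    have := hldle v
    have := hrdle v
    omega


/-! ## Layer 3: the bijections -/

lemma up_union (c : ℕ) (A B : Arcs) : up c (A ∪ B) = up c A ∪ up c B :=
  Finset.image_union _ _

lemma up_up (a b : ℕ) (A : Arcs) : up a (up b A) = up (b + a) A := by
  unfold up
  rw [Finset.image_image]
  apply Finset.image_congr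
  intro p _
  simp only [Function.comp_apply, Prod.ext_iff]
  constructor <;> omega

lemma up_injective (c : ℕ) : Function.Injective (up c) := by
  intro A B h
  rw [← down_up c A, ← down_up c B, h]

lemma ld_pos_of_mem {A : Arcs} {p : ℕ × ℕ} (h : p ∈ A) : 1 ≤ ld A p.2 := by
  rw [ld, Nat.one_le_iff_ne_zero, ← Nat.pos_iff_ne_zero, Finset.card_pos]
  exact ⟨p, Finset.mem_filter.2 ⟨h, rfl⟩⟩

lemma rd_pos_of_mem {A : Arcs} {p : ℕ × ℕ} (h : p ∈ A) : 1 ≤ rd A p.1 := by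
  rw [rd, Nat.one_le_iff_ne_zero, ← Nat.pos_iff_ne_zero, Finset.card_pos]
  exact ⟨p, Finset.mem_filter.2 ⟨h, rfl⟩⟩

lemma rd_one_eq (A : Arcs) : rd A 1 = (A.filter fun p => p.1 = 1).card := rfl

/-- the set of vertex-1 arcs. -/
def fil1 (A : Arcs) : Arcs := A.filter fun p => p.1 = 1

/-- Coverage for singleton case. -/
lemma coverage1 {n k : ℕ} {A : Arcs} (hA : IsZigzag n A) (hf : fil1 A = {(1, k)}) :
    ∀ p ∈ A, p = (1, k) ∨ (2 ≤ p.1 ∧ p.2 ≤ k) ∨ k + 1 ≤ p.1 := by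
  have hmem : (1, k) ∈ A := by
    have : (1, k) ∈ fil1 A := by rw [hf]; exact Finset.mem_singleton_self _
    exact Finset.mem_of_mem_filter _ this
  intro p hp
  by_cases h1 : p.1 = 1
  · left
    have : p ∈ fil1 A := Finset.mem_filter.2 ⟨hp, h1⟩
    rw [hf] at this
    exact Finset.mem_singleton.1 this
  · right
    have hb := mem_bounds hA hp
    have hnc : ¬ Crossing (1, k) p := hA.1.2 _ hmem _ hp
    have hrdk : rd A k = 0 := by
      by_contra hc
      exact hA.2.2 k ⟨ld_pos_of_mem hmem, by omega⟩
    have hpk : p.1 ≠ k := by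
      intro he
      have h := rd_pos_of_mem hp
      rw [he] at h
      omega
    unfold Crossing at hnc
    simp only at hnc
    omega

/-- Coverage for pair case. -/
lemma coverage2 {n j k : ℕ} {A : Arcs} (hA : IsZigzag n A) (hjk : j < k)
    (hf : fil1 A = {(1, j), (1, k)}) :
    ∀ p ∈ A, p = (1, j) ∨ p = (1, k) ∨ (2 ≤ p.1 ∧ p.2 ≤ j) ∨
      (j + 1 ≤ p.1 ∧ p.2 ≤ k) ∨ k + 1 ≤ p.1 := by
  have hmemj : (1, j) ∈ A := by
    have : (1, j) ∈ fil1 A := by rw [hf]; simp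
    exact Finset.mem_of_mem_filter _ this
  have hmemk : (1, k) ∈ A := by
    have : (1, k) ∈ fil1 A := by rw [hf]; simp
    exact Finset.mem_of_mem_filter _ this
  intro p hp
  by_cases h1 : p.1 = 1
  · have : p ∈ fil1 A := Finset.mem_filter.2 ⟨hp, h1⟩
    rw [hf] at this
    rcases Finset.mem_insert.1 this with h | h
    · left; exact h
    · right; left; exact Finset.mem_singleton.1 h
  · right; right
    have hb := mem_bounds hA hp
    have hncj : ¬ Crossing (1, j) p := hA.1.2 _ hmemj _ hp
    have hnck : ¬ Crossing (1, k) p := hA.1.2 _ hmemk _ hp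
    have hrdj : rd A j = 0 := by
      by_contra hc
      exact hA.2.2 j ⟨ld_pos_of_mem hmemj, by omega⟩
    have hrdk : rd A k = 0 := by
      by_contra hc
      exact hA.2.2 k ⟨ld_pos_of_mem hmemk, by omega⟩
    have hpj : p.1 ≠ j := fun he => by
      have h := rd_pos_of_mem hp; rw [he] at h; omega
    have hpk : p.1 ≠ k := fun he => by
      have h := rd_pos_of_mem hp; rw [he] at h; omega
    unfold Crossing at hncj hnck
    simp only at hncj hnck
    omega

/-- the boundary class -/
def IsZB (m : ℕ) (A : Arcs) : Prop := IsZigzag m A ∧ ld A m ≤ 1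

/-- the boundary `ld` bound when extracting a piece whose right end receives an arc from 1. -/
lemma piece_ld_bound {n t : ℕ} {A : Arcs} (hA : IsZigzag n A) (hmem : (1, t) ∈ A)
    {S : Arcs} (hS : S ⊆ A) (h2 : ∀ p ∈ S, 2 ≤ p.1) :
    (S.filter fun p => p.2 = t).card ≤ 1 := by
  have hsub : S.filter (fun p => p.2 = t) ⊆ (A.filter fun p => p.2 = t).erase (1, t) := by
    intro p hp
    obtain ⟨hpS, hpt⟩ := Finset.mem_filter.1 hp
    refine Finset.mem_erase.2 ⟨?_, Finset.mem_filter.2 ⟨hS hpS, hpt⟩⟩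
    intro he
    have := h2 p hpS
    rw [he] at this
    omega
  have h1 : (1, t) ∈ A.filter fun p => p.2 = t := Finset.mem_filter.2 ⟨hmem, rfl⟩
  have := Finset.card_le_card hsub
  rw [Finset.card_erase_of_mem h1] at this
  have hldt : ld A t ≤ 2 := by
    have := hA.2.1 t
    unfold deg at this
    omega
  unfold ld at hldt
  omega

lemma mem_up_bounds {m c : ℕ} {X : Arcs} (hX : IsZigzag m X) {p : ℕ × ℕ} (hp : p ∈ up c X) :
    c + 1 ≤ p.1 ∧ p.1 < p.2 ∧ p.2 ≤ m + c := by
  obtain ⟨q, hq, rfl⟩ := mem_up.1 hp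
  have := mem_bounds hX hq
  simp only
  omega

lemma fil1_up {c : ℕ} (hc : 1 ≤ c) {m : ℕ} {B : Arcs} (hB : IsZigzag m B) :
    fil1 (up c B) = ∅ := by
  rw [fil1, Finset.filter_eq_empty_iff]
  intro p hp
  have := mem_up_bounds hB hp
  omega

lemma eq0 (n : ℕ) :
    Nat.card {A : Arcs // IsZigzag (n + 1) A ∧ fil1 A = ∅}
      = Nat.card {A : Arcs // IsZigzag n A} := by
  have h2 : ∀ A : Arcs, IsZigzag (n + 1) A → fil1 A = ∅ → ∀ p ∈ A, 2 ≤ p.1 := by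
    intro A hA hf p hp
    have hb := mem_bounds hA hp
    rcases Nat.lt_or_ge p.1 2 with h | h
    · have h1 : p.1 = 1 := by omega
      have : p ∈ fil1 A := Finset.mem_filter.2 ⟨hp, h1⟩
      rw [hf] at this
      simp at this
    · exact h
  symm
  have hto : ∀ y : {A : Arcs // IsZigzag n A},
      IsZigzag (n + 1) (up 1 y.1) ∧ fil1 (up 1 y.1) = ∅ := fun y =>
    ⟨up_zigzag y.2, fil1_up le_rfl y.2⟩
  refine Nat.card_eq_of_bijective (fun y => ⟨up 1 y.1, hto y⟩) ⟨?_, ?_⟩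
  · intro a b h
    apply Subtype.ext
    apply up_injective 1
    simpa [Subtype.ext_iff] using h
  · rintro ⟨A, hA, hf⟩
    have hbnd : ∀ p ∈ A, 1 + 1 ≤ p.1 ∧ p.2 ≤ 1 + n := by
      intro p hp
      have := mem_bounds hA hp
      have := h2 A hA hf p hp
      omega
    refine ⟨⟨shiftDown 1 A, down_zigzag hA (Finset.Subset.refl A) hbnd⟩, ?_⟩
    apply Subtype.ext
    simp only
    exact up_down 1 A (fun p hp => by have := hbnd p hp; have := mem_bounds hA hp; omega)

lemma eq1 (n k : ℕ) (hk2 : 2 ≤ k) (hkn : k ≤ n + 1) :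
    Nat.card {A : Arcs // IsZigzag (n + 1) A ∧ fil1 A = {(1, k)}}
      = Nat.card ({B : Arcs // IsZB (k - 1) B} × {C : Arcs // IsZigzag (n + 1 - k) C}) := by
  symm
  -- the assembled structure
  set asm : Arcs → Arcs → Arcs := fun B C => insert (1, k) (up 1 B ∪ up k C) with hasm
  have key : ∀ B C : Arcs, IsZB (k - 1) B → IsZigzag (n + 1 - k) C →
      (IsZigzag (n + 1) (asm B C) ∧ fil1 (asm B C) = {(1, k)}) ∧
      (asm B C).filter (fun p => 2 ≤ p.1 ∧ p.2 ≤ k) = up 1 B ∧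
      (asm B C).filter (fun p => k + 1 ≤ p.1) = up k C := by
    intro B C hB hC
    obtain ⟨hBz, hBld⟩ := hB
    have hBb := fun (p : ℕ × ℕ) (hp : p ∈ up 1 B) => mem_up_bounds hBz hp
    have hCb := fun (p : ℕ × ℕ) (hp : p ∈ up k C) => mem_up_bounds hC hp
    have hunion : up 1 B ∪ up k C = up 1 (B ∪ up (k - 1) C) := by
      rw [up_union, up_up]
      congr 2
      omega
    have hDz : IsZigzag (n + 1) (up 1 B ∪ up k C) := by
      rw [hunion]
      have := up_zigzag (c := 1) (concat_zigzag hBz hC)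
      have he : k - 1 + (n + 1 - k) + 1 = n + 1 := by omega
      rwa [he] at this
    have hmemD : ∀ p ∈ up 1 B ∪ up k C, 2 ≤ p.1 ∧ p.1 < p.2 ∧
        (p.2 ≤ k ∨ k + 1 ≤ p.1) := by
      intro p hp
      rcases Finset.mem_union.1 hp with hp | hp
      · have := hBb p hp
        refine ⟨by omega, by omega, Or.inl (by omega)⟩
      · have := hCb p hp
        refine ⟨by omega, by omega, Or.inr (by omega)⟩
    have hnot : (1, k) ∉ up 1 B ∪ up k C := by
      intro hc
      have := hmemD _ hc
      simp only at this
      omega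
    have hzig : IsZigzag (n + 1) (asm B C) := by
      apply insert_arc_zigzag hDz hk2 hkn hnot
      · -- ld ≤ 1
        have hdisj : Disjoint (up 1 B) (up k C) := by
          rw [Finset.disjoint_left]
          intro p hp hp'
          have := hBb p hp
          have := hCb p hp'
          omega
        rw [ld_union hdisj, ld_up B (fun p hp => by have := mem_bounds hBz hp; omega),
          ld_up C (fun p hp => by have := mem_bounds hC hp; omega)]
        have h1 : (1 < k) = True := by simp; omega
        have h2 : ¬ (k < k) := by omega
        rw [if_pos (by omega), if_neg h2]
        have : ld B (k - 1) ≤ 1 := hBld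
        omega
      · apply rd_eq_zero
        intro p hp
        have := hmemD p hp
        rcases this.2.2 with h | h <;> omega
      · have : rd (up 1 B ∪ up k C) 1 = 0 := by
          apply rd_eq_zero
          intro p hp
          have := hmemD p hp
          omega
        omega
      · intro q hq
        have := hmemD q hq
        rcases this.2.2 with h | h
        · right; left; exact h
        · right; right; exact h
    refine ⟨⟨hzig, ?_⟩, ?_, ?_⟩
    · rw [hasm]
      simp only [fil1, Finset.filter_insert]
      rw [if_true]
      have : Finset.filter (fun p : ℕ × ℕ => p.1 = 1) (up 1 B ∪ up k C) = ∅ := by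
        rw [Finset.filter_eq_empty_iff]
        intro p hp
        have := hmemD p hp
        omega
      rw [this]
      rfl
    · rw [hasm]
      simp only [Finset.filter_insert]
      rw [if_neg (by simp)]
      rw [Finset.filter_union]
      rw [Finset.filter_true_of_mem (fun p hp => by have := hBb p hp; constructor <;> omega),
        Finset.filter_false_of_mem (fun p hp => by have := hCb p hp; intro hc; omega),
        Finset.union_empty]
    · rw [hasm]
      simp only [Finset.filter_insert]
      rw [if_neg (by simp; omega)]
      rw [Finset.filter_union]
      rw [Finset.filter_false_of_mem (fun p hp => by have := hBb p hp; intro hc; omega),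
        Finset.filter_true_of_mem (fun p hp => by have := hCb p hp; omega),
        Finset.empty_union]
  refine Nat.card_eq_of_bijective
    (fun y => ⟨asm y.1.1 y.2.1, (key y.1.1 y.2.1 y.1.2 y.2.2).1⟩) ⟨?_, ?_⟩
  · rintro ⟨⟨B, hB⟩, ⟨C, hC⟩⟩ ⟨⟨B', hB'⟩, ⟨C', hC'⟩⟩ h
    have he : asm B C = asm B' C' := by simpa [Subtype.ext_iff] using h
    obtain ⟨-, hB1, hC1⟩ := key B C hB hC
    obtain ⟨-, hB1', hC1'⟩ := key B' C' hB' hC'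
    have : up 1 B = up 1 B' := by rw [← hB1, ← hB1', he]
    have hBB : B = B' := up_injective 1 this
    have : up k C = up k C' := by rw [← hC1, ← hC1', he]
    have hCC : C = C' := up_injective k this
    simp [Prod.ext_iff, Subtype.ext_iff, hBB, hCC]
  · rintro ⟨A, hA, hf⟩
    have hmem : (1, k) ∈ A := by
      have : (1, k) ∈ fil1 A := by rw [hf]; exact Finset.mem_singleton_self _
      exact Finset.mem_of_mem_filter _ this
    set S1 : Arcs := A.filter (fun p => 2 ≤ p.1 ∧ p.2 ≤ k) with hS1
    set S2 : Arcs := A.filter (fun p => k + 1 ≤ p.1) with hS2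
    have hS1b : ∀ p ∈ S1, 2 ≤ p.1 ∧ p.2 ≤ k := fun p hp => (Finset.mem_filter.1 hp).2
    have hS2b : ∀ p ∈ S2, k + 1 ≤ p.1 := fun p hp => (Finset.mem_filter.1 hp).2
    have hS1A : S1 ⊆ A := Finset.filter_subset _ _
    have hS2A : S2 ⊆ A := Finset.filter_subset _ _
    have hBzig : IsZigzag (k - 1) (shiftDown 1 S1) := by
      apply down_zigzag hA hS1A
      intro p hp
      have := hS1b p hp
      omega
    have hBld : ld (shiftDown 1 S1) (k - 1) ≤ 1 := by
      rw [ld_down (fun p hp => by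
        have := hS1b p hp
        have := mem_bounds hA (hS1A hp)
        omega)]
      have he : k - 1 + 1 = k := by omega
      rw [he]
      exact piece_ld_bound hA hmem hS1A (fun p hp => (hS1b p hp).1)
    have hCzig : IsZigzag (n + 1 - k) (shiftDown k S2) := by
      apply down_zigzag hA hS2A
      intro p hp
      have := hS2b p hp
      have := mem_bounds hA (hS2A hp)
      omega
    refine ⟨⟨⟨shiftDown 1 S1, hBzig, hBld⟩, ⟨shiftDown k S2, hCzig⟩⟩, ?_⟩
    apply Subtype.ext
    simp only
    have hu1 : up 1 (shiftDown 1 S1) = S1 := by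
      apply up_down
      intro p hp
      have := mem_bounds hA (hS1A hp)
      omega
    have hu2 : up k (shiftDown k S2) = S2 := by
      apply up_down
      intro p hp
      have := hS2b p hp
      have := mem_bounds hA (hS2A hp)
      omega
    rw [hasm]
    simp only
    rw [hu1, hu2]
    -- A = insert (1,k) (S1 ∪ S2)
    symm
    apply Finset.ext
    intro p
    constructor
    · intro hp
      rcases coverage1 hA hf p hp with h | h | h
      · rw [h]; exact Finset.mem_insert_self _ _
      · exact Finset.mem_insert_of_mem (Finset.mem_union_left _
          (Finset.mem_filter.2 ⟨hp, h⟩))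
      · exact Finset.mem_insert_of_mem (Finset.mem_union_right _
          (Finset.mem_filter.2 ⟨hp, h⟩))
    · intro hp
      rcases Finset.mem_insert.1 hp with rfl | hp
      · exact hmem
      · rcases Finset.mem_union.1 hp with hp | hp
        · exact hS1A hp
        · exact hS2A hp

lemma eq2 (n j k : ℕ) (hj2 : 2 ≤ j) (hjk : j < k) (hkn : k ≤ n + 1) :
    Nat.card {A : Arcs // IsZigzag (n + 1) A ∧ fil1 A = {(1, j), (1, k)}}
      = Nat.card ({B : Arcs // IsZB (j - 1) B} ×
          {B : Arcs // IsZB (k - j) B} × {C : Arcs // IsZigzag (n + 1 - k) C}) := by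
  symm
  set asm : Arcs → Arcs → Arcs → Arcs := fun B1 B2 C =>
    insert (1, j) (insert (1, k) (up 1 B1 ∪ up j B2 ∪ up k C)) with hasm
  have key : ∀ B1 B2 C : Arcs, IsZB (j - 1) B1 → IsZB (k - j) B2 → IsZigzag (n + 1 - k) C →
      (IsZigzag (n + 1) (asm B1 B2 C) ∧ fil1 (asm B1 B2 C) = {(1, j), (1, k)}) ∧
      (asm B1 B2 C).filter (fun p => 2 ≤ p.1 ∧ p.2 ≤ j) = up 1 B1 ∧
      (asm B1 B2 C).filter (fun p => j + 1 ≤ p.1 ∧ p.2 ≤ k) = up j B2 ∧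
      (asm B1 B2 C).filter (fun p => k + 1 ≤ p.1) = up k C := by
    intro B1 B2 C hB1 hB2 hC
    obtain ⟨hB1z, hB1ld⟩ := hB1
    obtain ⟨hB2z, hB2ld⟩ := hB2
    have hb1 := fun (p : ℕ × ℕ) (hp : p ∈ up 1 B1) => mem_up_bounds hB1z hp
    have hb2 := fun (p : ℕ × ℕ) (hp : p ∈ up j B2) => mem_up_bounds hB2z hp
    have hb3 := fun (p : ℕ × ℕ) (hp : p ∈ up k C) => mem_up_bounds hC hp
    set D : Arcs := up 1 B1 ∪ up j B2 ∪ up k C with hD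
    have hmemD : ∀ p ∈ D, 2 ≤ p.1 ∧ p.1 < p.2 ∧
        ((p.2 ≤ j) ∨ (j + 1 ≤ p.1 ∧ p.2 ≤ k) ∨ k + 1 ≤ p.1) := by
      intro p hp
      rcases Finset.mem_union.1 hp with hp | hp
      · rcases Finset.mem_union.1 hp with hp | hp
        · have := hb1 p hp
          exact ⟨by omega, by omega, Or.inl (by omega)⟩
        · have := hb2 p hp
          exact ⟨by omega, by omega, Or.inr (Or.inl (by omega))⟩
      · have := hb3 p hp
        exact ⟨by omega, by omega, Or.inr (Or.inr (by omega))⟩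
    have hDz : IsZigzag (n + 1) D := by
      have hinner : up j B2 ∪ up k C = up j (B2 ∪ up (k - j) C) := by
        rw [up_union, up_up]
        congr 2
        omega
      have hun : D = up 1 (B1 ∪ up (j - 1) (B2 ∪ up (k - j) C)) := by
        rw [hD, up_union, up_up, Finset.union_assoc, hinner]
        congr 3
        omega
      rw [hun]
      have h1 := concat_zigzag hB2z hC
      have h2 := concat_zigzag hB1z h1
      have h3 := up_zigzag (c := 1) h2
      have he : j - 1 + (k - j + (n + 1 - k)) + 1 = n + 1 := by omega
      rwa [he] at h3
    have hd12 : Disjoint (up 1 B1) (up j B2) := by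
      rw [Finset.disjoint_left]
      intro p hp hp'
      have := hb1 p hp
      have := hb2 p hp'
      omega
    have hd123 : Disjoint (up 1 B1 ∪ up j B2) (up k C) := by
      rw [Finset.disjoint_left]
      intro p hp hp'
      have h3 := hb3 p hp'
      rcases Finset.mem_union.1 hp with hp | hp
      · have := hb1 p hp; omega
      · have := hb2 p hp; omega
    have hldD : ∀ v, ld D v = ld (up 1 B1) v + ld (up j B2) v + ld (up k C) v := by
      intro v
      rw [hD, ld_union hd123, ld_union hd12]
    have hrdD : ∀ v, rd D v = rd (up 1 B1) v + rd (up j B2) v + rd (up k C) v := by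
      intro v
      rw [hD, rd_union hd123, rd_union hd12]
    have hnotk : (1, k) ∉ D := fun hc => by have := hmemD _ hc; simp only at this; omega
    have hldDk : ld D k ≤ 1 := by
      have e1 : ld (up 1 B1) k = 0 := ld_eq_zero (fun p hp => by have := hb1 p hp; omega)
      have e2 : ld (up j B2) k = ld B2 (k - j) := by
        rw [ld_up B2 (fun p hp => by have := mem_bounds hB2z hp; omega), if_pos (by omega)]
      have e3 : ld (up k C) k = 0 := ld_eq_zero (fun p hp => by have := hb3 p hp; omega)
      rw [hldD, e1, e2, e3]
      omega
    have hA1z : IsZigzag (n + 1) (insert (1, k) D) := by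
      apply insert_arc_zigzag hDz (by omega) hkn hnotk hldDk
      · apply rd_eq_zero
        intro p hp
        have := hmemD p hp
        omega
      · have : rd D 1 = 0 := rd_eq_zero (fun p hp => by have := hmemD p hp; omega)
        omega
      · intro q hq
        have := hmemD q hq
        omega
    have hnotj : (1, j) ∉ insert (1, k) D := by
      intro hc
      rcases Finset.mem_insert.1 hc with h | h
      · simp only [Prod.mk.injEq] at h
        omega
      · have := hmemD _ h
        simp only at this
        omega
    have hzig : IsZigzag (n + 1) (asm B1 B2 C) := by
      apply insert_arc_zigzag hA1z hj2 (by omega) hnotj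
      · rw [ld_insert hnotk]
        simp only
        rw [if_neg (by omega)]
        have e1 : ld (up 1 B1) j = ld B1 (j - 1) := by
          rw [ld_up B1 (fun p hp => by have := mem_bounds hB1z hp; omega), if_pos (by omega)]
        have e2 : ld (up j B2) j = 0 := ld_eq_zero (fun p hp => by have := hb2 p hp; omega)
        have e3 : ld (up k C) j = 0 := ld_eq_zero (fun p hp => by have := hb3 p hp; omega)
        rw [hldD, e1, e2, e3]
        omega
      · rw [rd_insert hnotk]
        simp only
        rw [if_neg (by omega)]
        have e1 : rd (up 1 B1) j = 0 := rd_eq_zero (fun p hp => by have := hb1 p hp; omega)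
        have e2 : rd (up j B2) j = 0 := rd_eq_zero (fun p hp => by have := hb2 p hp; omega)
        have e3 : rd (up k C) j = 0 := rd_eq_zero (fun p hp => by have := hb3 p hp; omega)
        rw [hrdD, e1, e2, e3]
      · have h0 : rd D 1 = 0 := rd_eq_zero (fun p hp => by have := hmemD p hp; omega)
        rw [rd_insert hnotk, h0]
        simp
      · intro q hq
        rcases Finset.mem_insert.1 hq with rfl | hq
        · left; rfl
        · have := hmemD q hq
          omega
    have hfil : fil1 (asm B1 B2 C) = {(1, j), (1, k)} := by
      rw [hasm]
      simp only [fil1, Finset.filter_insert]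
      have h0 : Finset.filter (fun p : ℕ × ℕ => p.1 = 1) (up 1 B1 ∪ up j B2 ∪ up k C) = ∅ := by
        rw [← hD, Finset.filter_eq_empty_iff]
        intro p hp
        have := hmemD p hp
        omega
      rw [Finset.union_assoc] at h0
      simp [h0]
    refine ⟨⟨hzig, hfil⟩, ?_, ?_, ?_⟩
    · rw [hasm]
      simp only [Finset.filter_insert]
      rw [if_neg (by simp), if_neg (by simp)]
      rw [Finset.filter_union, Finset.filter_union]
      rw [Finset.filter_true_of_mem (fun p hp => by have := hb1 p hp; constructor <;> omega),
        Finset.filter_false_of_mem (fun p hp => by have := hb2 p hp; intro hc; omega),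
        Finset.filter_false_of_mem (fun p hp => by have := hb3 p hp; intro hc; omega),
        Finset.union_empty, Finset.union_empty]
    · rw [hasm]
      simp only [Finset.filter_insert]
      rw [if_neg (by simp; omega), if_neg (by simp; omega)]
      rw [Finset.filter_union, Finset.filter_union]
      rw [Finset.filter_false_of_mem (fun p hp => by have := hb1 p hp; intro hc; omega),
        Finset.filter_true_of_mem (fun p hp => by have := hb2 p hp; constructor <;> omega),
        Finset.filter_false_of_mem (fun p hp => by have := hb3 p hp; intro hc; omega),
        Finset.empty_union, Finset.union_empty]
    · rw [hasm]
      simp only [Finset.filter_insert]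
      rw [if_neg (by simp; omega), if_neg (by simp; omega)]
      rw [Finset.filter_union, Finset.filter_union]
      rw [Finset.filter_false_of_mem (fun p hp => by have := hb1 p hp; intro hc; omega),
        Finset.filter_false_of_mem (fun p hp => by have := hb2 p hp; intro hc; omega),
        Finset.filter_true_of_mem (fun p hp => by have := hb3 p hp; omega),
        Finset.empty_union, Finset.empty_union]
  refine Nat.card_eq_of_bijective
    (fun y => ⟨asm y.1.1 y.2.1.1 y.2.2.1, (key _ _ _ y.1.2 y.2.1.2 y.2.2.2).1⟩) ⟨?_, ?_⟩
  · rintro ⟨⟨B1, hB1⟩, ⟨B2, hB2⟩, ⟨C, hC⟩⟩ ⟨⟨B1', hB1'⟩, ⟨B2', hB2'⟩, ⟨C', hC'⟩⟩ h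
    have he : asm B1 B2 C = asm B1' B2' C' := by simpa [Subtype.ext_iff] using h
    obtain ⟨-, k1, k2, k3⟩ := key B1 B2 C hB1 hB2 hC
    obtain ⟨-, k1', k2', k3'⟩ := key B1' B2' C' hB1' hB2' hC'
    have e1 : B1 = B1' := up_injective 1 (by rw [← k1, ← k1', he])
    have e2 : B2 = B2' := up_injective j (by rw [← k2, ← k2', he])
    have e3 : C = C' := up_injective k (by rw [← k3, ← k3', he])
    simp [Prod.ext_iff, Subtype.ext_iff, e1, e2, e3]
  · rintro ⟨A, hA, hf⟩
    have hmemj : (1, j) ∈ A := by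
      have : (1, j) ∈ fil1 A := by rw [hf]; simp
      exact Finset.mem_of_mem_filter _ this
    have hmemk : (1, k) ∈ A := by
      have : (1, k) ∈ fil1 A := by rw [hf]; simp
      exact Finset.mem_of_mem_filter _ this
    set S1 : Arcs := A.filter (fun p => 2 ≤ p.1 ∧ p.2 ≤ j) with hS1
    set S2 : Arcs := A.filter (fun p => j + 1 ≤ p.1 ∧ p.2 ≤ k) with hS2
    set S3 : Arcs := A.filter (fun p => k + 1 ≤ p.1) with hS3
    have hS1b : ∀ p ∈ S1, 2 ≤ p.1 ∧ p.2 ≤ j := fun p hp => (Finset.mem_filter.1 hp).2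
    have hS2b : ∀ p ∈ S2, j + 1 ≤ p.1 ∧ p.2 ≤ k := fun p hp => (Finset.mem_filter.1 hp).2
    have hS3b : ∀ p ∈ S3, k + 1 ≤ p.1 := fun p hp => (Finset.mem_filter.1 hp).2
    have hS1A : S1 ⊆ A := Finset.filter_subset _ _
    have hS2A : S2 ⊆ A := Finset.filter_subset _ _
    have hS3A : S3 ⊆ A := Finset.filter_subset _ _
    have hB1zig : IsZigzag (j - 1) (shiftDown 1 S1) :=
      down_zigzag hA hS1A (fun p hp => by have := hS1b p hp; omega)
    have hB1ld : ld (shiftDown 1 S1) (j - 1) ≤ 1 := by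
      rw [ld_down (fun p hp => by
        have := hS1b p hp
        have := mem_bounds hA (hS1A hp)
        omega)]
      have he : j - 1 + 1 = j := by omega
      rw [he]
      exact piece_ld_bound hA hmemj hS1A (fun p hp => (hS1b p hp).1)
    have hB2zig : IsZigzag (k - j) (shiftDown j S2) :=
      down_zigzag hA hS2A (fun p hp => by have := hS2b p hp; omega)
    have hB2ld : ld (shiftDown j S2) (k - j) ≤ 1 := by
      rw [ld_down (fun p hp => by
        have := hS2b p hp
        have := mem_bounds hA (hS2A hp)
        omega)]
      have he : k - j + j = k := by omega
      rw [he]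
      exact piece_ld_bound hA hmemk hS2A (fun p hp => by have := hS2b p hp; omega)
    have hCzig : IsZigzag (n + 1 - k) (shiftDown k S3) :=
      down_zigzag hA hS3A (fun p hp => by
        have := hS3b p hp
        have := mem_bounds hA (hS3A hp)
        omega)
    refine ⟨⟨⟨shiftDown 1 S1, hB1zig, hB1ld⟩, ⟨shiftDown j S2, hB2zig, hB2ld⟩,
      ⟨shiftDown k S3, hCzig⟩⟩, ?_⟩
    apply Subtype.ext
    simp only
    have hu1 : up 1 (shiftDown 1 S1) = S1 :=
      up_down _ _ (fun p hp => by have := mem_bounds hA (hS1A hp); omega)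
    have hu2 : up j (shiftDown j S2) = S2 :=
      up_down _ _ (fun p hp => by
        have := hS2b p hp
        have := mem_bounds hA (hS2A hp)
        omega)
    have hu3 : up k (shiftDown k S3) = S3 :=
      up_down _ _ (fun p hp => by
        have := hS3b p hp
        have := mem_bounds hA (hS3A hp)
        omega)
    rw [hasm]
    simp only
    rw [hu1, hu2, hu3]
    symm
    apply Finset.ext
    intro p
    constructor
    · intro hp
      rcases coverage2 hA hjk hf p hp with h | h | h | h | h
      · rw [h]; exact Finset.mem_insert_self _ _
      · rw [h]; exact Finset.mem_insert_of_mem (Finset.mem_insert_self _ _)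
      · exact Finset.mem_insert_of_mem (Finset.mem_insert_of_mem
          (Finset.mem_union_left _ (Finset.mem_union_left _ (Finset.mem_filter.2 ⟨hp, h⟩))))
      · exact Finset.mem_insert_of_mem (Finset.mem_insert_of_mem
          (Finset.mem_union_left _ (Finset.mem_union_right _ (Finset.mem_filter.2 ⟨hp, h⟩))))
      · exact Finset.mem_insert_of_mem (Finset.mem_insert_of_mem
          (Finset.mem_union_right _ (Finset.mem_filter.2 ⟨hp, h⟩)))
    · intro hp
      rcases Finset.mem_insert.1 hp with rfl | hp
      · exact hmemj
      rcases Finset.mem_insert.1 hp with rfl | hp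
      · exact hmemk
      rcases Finset.mem_union.1 hp with hp | hp
      · rcases Finset.mem_union.1 hp with hp | hp
        · exact hS1A hp
        · exact hS2A hp
      · exact hS3A hp

/-! ## Layer 6: partition and counting -/

lemma card_partition {α ι : Type*} [DecidableEq ι] (P : α → Prop) [Finite {x : α // P x}]
    (f : α → ι) (s : Finset ι) (hmem : ∀ x, P x → f x ∈ s) :
    Nat.card {x // P x} = ∑ i ∈ s, Nat.card {x // P x ∧ f x = i} := by
  haveI : ∀ i : ι, Finite {x // P x ∧ f x = i} := fun i =>
    Finite.of_injective (fun y : {x // P x ∧ f x = i} => (⟨y.1, y.2.1⟩ : {x // P x}))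
      (fun a b h => by
        apply Subtype.ext
        simpa [Subtype.ext_iff] using h)
  have e : ∀ i : s, {y : {x // P x} // (⟨f y.1, hmem y.1 y.2⟩ : s) = i} ≃
      {x // P x ∧ f x = i.1} := fun i =>
    { toFun := fun y => ⟨y.1.1, y.1.2, by
        have := congrArg Subtype.val y.2
        simpa using this⟩
      invFun := fun z => ⟨⟨z.1, z.2.1⟩, Subtype.ext z.2.2⟩
      left_inv := fun y => Subtype.ext (Subtype.ext rfl)
      right_inv := fun z => Subtype.ext rfl }
  haveI := Fintype.ofFinite {x // P x}
  haveI : ∀ i : s, Fintype {x // P x ∧ f x = i.1} := fun i => Fintype.ofFinite _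
  calc Nat.card {x // P x} = Fintype.card {x // P x} := Nat.card_eq_fintype_card
    _ = ∑ i : s, Fintype.card {y : {x // P x} // (⟨f y.1, hmem y.1 y.2⟩ : s) = i} := by
        rw [← Fintype.card_sigma]
        exact Fintype.card_congr (Equiv.sigmaFiberEquiv _).symm
    _ = ∑ i : s, Nat.card {x // P x ∧ f x = i.1} := by
        refine Finset.sum_congr rfl (fun i _ => ?_)
        rw [← Nat.card_eq_fintype_card, Nat.card_congr (e i), Nat.card_eq_fintype_card]
    _ = ∑ i ∈ s, Nat.card {x // P x ∧ f x = i} :=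
        Finset.sum_coe_sort s (fun i => Nat.card {x // P x ∧ f x = i})

/-- reversal map. -/
def rev (n : ℕ) (A : Arcs) : Arcs := A.image fun p => (n + 1 - p.2, n + 1 - p.1)

lemma mem_rev_bounds {n : ℕ} {A : Arcs} (hA : IsZigzag n A) {p : ℕ × ℕ} (hp : p ∈ rev n A) :
    1 ≤ p.1 ∧ p.1 < p.2 ∧ p.2 ≤ n := by
  obtain ⟨q, hq, rfl⟩ := Finset.mem_image.1 hp
  have := mem_bounds hA hq
  simp only
  omega

lemma rev_ld {n v : ℕ} {A : Arcs} (hA : IsZigzag n A) (h1 : 1 ≤ v) (hn : v ≤ n) :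
    ld (rev n A) v = rd A (n + 1 - v) := by
  unfold ld rev rd
  rw [Finset.filter_image, Finset.card_image_of_injOn]
  · congr 1
    apply Finset.filter_congr
    intro p hp
    have := mem_bounds hA hp
    simp only [eq_iff_iff]
    omega
  · intro p hp q hq he
    have := mem_bounds hA (Finset.mem_of_mem_filter _ hp)
    have := mem_bounds hA (Finset.mem_of_mem_filter _ hq)
    simp only [Prod.mk.injEq, Prod.ext_iff] at he ⊢
    omega

lemma rev_rd {n v : ℕ} {A : Arcs} (hA : IsZigzag n A) (h1 : 1 ≤ v) (hn : v ≤ n) :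
    rd (rev n A) v = ld A (n + 1 - v) := by
  unfold rd rev ld
  rw [Finset.filter_image, Finset.card_image_of_injOn]
  · congr 1
    apply Finset.filter_congr
    intro p hp
    have := mem_bounds hA hp
    simp only [eq_iff_iff]
    omega
  · intro p hp q hq he
    have := mem_bounds hA (Finset.mem_of_mem_filter _ hp)
    have := mem_bounds hA (Finset.mem_of_mem_filter _ hq)
    simp only [Prod.mk.injEq, Prod.ext_iff] at he ⊢
    omega

lemma rev_zigzag {n : ℕ} {A : Arcs} (hA : IsZigzag n A) : IsZigzag n (rev n A) := by
  refine ⟨⟨fun p hp => mem_rev_bounds hA hp, ?_⟩, ?_, ?_⟩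
  · intro p hp q hq hc
    obtain ⟨p', hp', rfl⟩ := Finset.mem_image.1 hp
    obtain ⟨q', hq', rfl⟩ := Finset.mem_image.1 hq
    have hbp := mem_bounds hA hp'
    have hbq := mem_bounds hA hq'
    obtain ⟨c1, c2, c3⟩ := hc
    simp only at c1 c2 c3
    exact hA.1.2 q' hq' p' hp' ⟨by omega, by omega, by omega⟩
  · intro v
    rcases Nat.lt_or_ge v 1 with hv | hv
    · have h1 : ld (rev n A) v = 0 :=
        ld_eq_zero (fun p hp => by have := mem_rev_bounds hA hp; omega)
      have h2 : rd (rev n A) v = 0 :=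
        rd_eq_zero (fun p hp => by have := mem_rev_bounds hA hp; omega)
      unfold deg
      omega
    rcases Nat.lt_or_ge n v with hv' | hv'
    · have h1 : ld (rev n A) v = 0 :=
        ld_eq_zero (fun p hp => by have := mem_rev_bounds hA hp; omega)
      have h2 : rd (rev n A) v = 0 :=
        rd_eq_zero (fun p hp => by have := mem_rev_bounds hA hp; omega)
      unfold deg
      omega
    · have := hA.2.1 (n + 1 - v)
      unfold deg at this ⊢
      rw [rev_ld hA hv hv', rev_rd hA hv hv']
      omega
  · intro v
    rcases Nat.lt_or_ge v 1 with hv | hv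
    · have h1 : ld (rev n A) v = 0 :=
        ld_eq_zero (fun p hp => by have := mem_rev_bounds hA hp; omega)
      omega
    rcases Nat.lt_or_ge n v with hv' | hv'
    · have h1 : ld (rev n A) v = 0 :=
        ld_eq_zero (fun p hp => by have := mem_rev_bounds hA hp; omega)
      omega
    · rw [rev_ld hA hv hv', rev_rd hA hv hv']
      have := hA.2.2 (n + 1 - v)
      omega

lemma rev_rev {n : ℕ} {A : Arcs} (hA : IsZigzag n A) : rev n (rev n A) = A := by
  unfold rev
  rw [Finset.image_image]
  rw [Finset.image_congr (g := id), Finset.image_id]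
  intro p hp
  have := mem_bounds hA hp
  simp only [Function.comp_apply, id_eq, Prod.ext_iff]
  constructor <;> omega

/-- the two boundary classes have the same cardinality. -/
lemma zb_eq_gcl (n : ℕ) :
    Nat.card {A : Arcs // IsZigzag n A ∧ rd A 1 ≤ 1} = Nat.card {A : Arcs // IsZB n A} := by
  rcases Nat.eq_zero_or_pos n with rfl | hn
  · -- n = 0 : both classes are {∅}
    have hz : ∀ A : Arcs, IsZigzag 0 A → A = ∅ := by
      intro A hA
      apply Finset.eq_empty_of_forall_notMem
      intro p hp
      have := mem_bounds hA hp
      omega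
    have hzig0 : IsZigzag 0 (∅ : Arcs) := by
      refine ⟨⟨fun p hp => by simp at hp, fun p hp => by simp at hp⟩, ?_, ?_⟩ <;>
        intro v <;> simp [deg, ld, rd]
    have hc : ∀ P : Arcs → Prop, (∀ A, P A → A = ∅) → P ∅ → Nat.card {A // P A} = 1 := by
      intro P hP h0
      rw [Nat.card_eq_one_iff_unique]
      exact ⟨⟨fun a b => Subtype.ext (by rw [hP a.1 a.2, hP b.1 b.2])⟩, ⟨⟨∅, h0⟩⟩⟩
    rw [hc _ (fun A hA => hz A hA.1) ⟨hzig0, by simp [rd]⟩,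
      hc _ (fun A hA => hz A hA.1) ⟨hzig0, by simp [IsZB, ld]⟩]
  · have key : ∀ A : Arcs, IsZB n A → IsZigzag n (rev n A) ∧ rd (rev n A) 1 ≤ 1 := by
      intro A ⟨hA, hld⟩
      refine ⟨rev_zigzag hA, ?_⟩
      rw [rev_rd hA le_rfl hn]
      have he : n + 1 - 1 = n := by omega
      rwa [he]
    symm
    refine Nat.card_eq_of_bijective (fun y => ⟨rev n y.1, key y.1 y.2⟩) ⟨?_, ?_⟩
    · rintro ⟨A, hA⟩ ⟨B, hB⟩ h
      simp only [Subtype.mk.injEq] at h ⊢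
      rw [← rev_rev hA.1, ← rev_rev hB.1, h]
    · rintro ⟨A, hA, hrd⟩
      have hrev : IsZB n (rev n A) := by
        refine ⟨rev_zigzag hA, ?_⟩
        rw [rev_ld hA hn le_rfl]
        have he : n + 1 - n = 1 := by omega
        rwa [he]
      exact ⟨⟨rev n A, hrev⟩, Subtype.ext (rev_rev hA)⟩

/-! ## Layer 7 : the counting identities -/

noncomputable def zb (n : ℕ) : ℕ := Nat.card {A : Arcs // IsZB n A}

instance fin_zig (n : ℕ) : Finite {A : Arcs // IsZigzag n A} :=
  finite_class n _ (fun A hA => hA.1.1)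

/-- index sets -/
def sing (n : ℕ) : Finset Arcs := (Finset.Icc 2 (n + 1)).image fun k => ({(1, k)} : Arcs)

def pairT (n : ℕ) : Finset (ℕ × ℕ) :=
  ((Finset.Icc 2 (n + 1)) ×ˢ (Finset.Icc 2 (n + 1))).filter fun q => q.1 < q.2

def pairs (n : ℕ) : Finset Arcs := (pairT n).image fun q => ({(1, q.1), (1, q.2)} : Arcs)

lemma fil1_elts {n : ℕ} {A : Arcs} (hA : IsZigzag (n + 1) A) :
    ∀ p ∈ fil1 A, p = (1, p.2) ∧ 2 ≤ p.2 ∧ p.2 ≤ n + 1 := by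
  intro p hp
  obtain ⟨hpA, hp1⟩ := Finset.mem_filter.1 hp
  have := mem_bounds hA hpA
  exact ⟨by rw [Prod.ext_iff]; exact ⟨hp1, rfl⟩, by omega, by omega⟩

lemma fil1_card {n : ℕ} {A : Arcs} (hA : IsZigzag (n + 1) A) : (fil1 A).card ≤ 2 := by
  have h := hA.2.1 1
  unfold deg at h
  have : rd A 1 = (fil1 A).card := rfl
  omega

lemma fil1_mem_sing {n : ℕ} {A : Arcs} (hA : IsZigzag (n + 1) A)
    (h1 : (fil1 A).card = 1) : fil1 A ∈ sing n := by
  obtain ⟨p, hp⟩ := Finset.card_eq_one.1 h1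
  have hpm : p ∈ fil1 A := by rw [hp]; exact Finset.mem_singleton_self _
  obtain ⟨hpe, hp2, hpn⟩ := fil1_elts hA p hpm
  rw [sing, Finset.mem_image]
  exact ⟨p.2, Finset.mem_Icc.2 ⟨hp2, hpn⟩, by rw [hp, hpe]⟩

lemma fil1_mem {n : ℕ} {A : Arcs} (hA : IsZigzag (n + 1) A) :
    fil1 A ∈ insert (∅ : Arcs) (sing n ∪ pairs n) := by
  have hcard := fil1_card hA
  interval_cases h : (fil1 A).card
  · exact Finset.mem_insert.2 (Or.inl (Finset.card_eq_zero.1 h))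
  · exact Finset.mem_insert.2 (Or.inr (Finset.mem_union_left _ (fil1_mem_sing hA h)))
  · obtain ⟨p, q, hpq, hf⟩ := Finset.card_eq_two.1 h
    have hpm : p ∈ fil1 A := by rw [hf]; simp
    have hqm : q ∈ fil1 A := by rw [hf]; simp
    obtain ⟨hpe, hp2, hpn⟩ := fil1_elts hA p hpm
    obtain ⟨hqe, hq2, hqn⟩ := fil1_elts hA q hqm
    have hne : p.2 ≠ q.2 := by
      intro he
      apply hpq
      rw [hpe, hqe, he]
    apply Finset.mem_insert.2
    apply Or.inr
    apply Finset.mem_union_right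
    rw [pairs, Finset.mem_image]
    rcases Nat.lt_or_ge p.2 q.2 with hlt | hge
    · refine ⟨(p.2, q.2), ?_, ?_⟩
      · rw [pairT, Finset.mem_filter, Finset.mem_product]
        exact ⟨⟨Finset.mem_Icc.2 ⟨hp2, hpn⟩, Finset.mem_Icc.2 ⟨hq2, hqn⟩⟩, hlt⟩
      · rw [hf]
        simp only
        rw [← hpe, ← hqe]
    · refine ⟨(q.2, p.2), ?_, ?_⟩
      · rw [pairT, Finset.mem_filter, Finset.mem_product]
        exact ⟨⟨Finset.mem_Icc.2 ⟨hq2, hqn⟩, Finset.mem_Icc.2 ⟨hp2, hpn⟩⟩, by omega⟩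
      · rw [hf]
        simp only
        rw [← hpe, ← hqe, Finset.pair_comm]

lemma empty_not_mem (n : ℕ) : (∅ : Arcs) ∉ sing n ∪ pairs n := by
  intro hc
  rcases Finset.mem_union.1 hc with h | h
  · obtain ⟨k, _, hk⟩ := Finset.mem_image.1 h
    exact (Finset.singleton_ne_empty _) hk
  · obtain ⟨q, _, hq⟩ := Finset.mem_image.1 h
    exact (Finset.insert_ne_empty _ _) hq

lemma sing_pairs_disj (n : ℕ) : Disjoint (sing n) (pairs n) := by
  rw [Finset.disjoint_left]
  intro S hS hS'
  obtain ⟨k, _, hk⟩ := Finset.mem_image.1 hS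
  obtain ⟨q, hq, hq'⟩ := Finset.mem_image.1 hS'
  have hqlt : q.1 < q.2 := (Finset.mem_filter.1 hq).2
  have h1 : S.card = 1 := by rw [← hk]; simp
  have h2 : S.card = 2 := by
    rw [← hq']
    rw [Finset.card_insert_of_notMem (by simp; omega)]
    simp
  omega

lemma sing_inj (n : ℕ) : ∀ x ∈ Finset.Icc 2 (n + 1), ∀ y ∈ Finset.Icc 2 (n + 1),
    ({(1, x)} : Arcs) = {(1, y)} → x = y := by
  intro x _ y _ h
  have : ((1 : ℕ), x) ∈ ({(1, y)} : Arcs) := by rw [← h]; simp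
  simpa [Prod.ext_iff] using Finset.mem_singleton.1 this

lemma pair_inj (n : ℕ) : ∀ x ∈ pairT n, ∀ y ∈ pairT n,
    ({(1, x.1), (1, x.2)} : Arcs) = {(1, y.1), (1, y.2)} → x = y := by
  intro x hx y hy h
  have hxlt : x.1 < x.2 := (Finset.mem_filter.1 hx).2
  have hylt : y.1 < y.2 := (Finset.mem_filter.1 hy).2
  have h1 : ((1 : ℕ), x.1) ∈ ({(1, y.1), (1, y.2)} : Arcs) := by rw [← h]; simp
  have h2 : ((1 : ℕ), x.2) ∈ ({(1, y.1), (1, y.2)} : Arcs) := by rw [← h]; simp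
  have h3 : ((1 : ℕ), y.1) ∈ ({(1, x.1), (1, x.2)} : Arcs) := by rw [h]; simp
  have e1 : x.1 = y.1 ∨ x.1 = y.2 := by
    rcases Finset.mem_insert.1 h1 with h' | h'
    · left; simpa [Prod.ext_iff] using h'
    · right; simpa [Prod.ext_iff] using Finset.mem_singleton.1 h'
  have e2 : x.2 = y.1 ∨ x.2 = y.2 := by
    rcases Finset.mem_insert.1 h2 with h' | h'
    · left; simpa [Prod.ext_iff] using h'
    · right; simpa [Prod.ext_iff] using Finset.mem_singleton.1 h'
  have e3 : y.1 = x.1 ∨ y.1 = x.2 := by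
    rcases Finset.mem_insert.1 h3 with h' | h'
    · left; simpa [Prod.ext_iff] using h'
    · right; simpa [Prod.ext_iff] using Finset.mem_singleton.1 h'
  rw [Prod.ext_iff]
  omega

/-- Identity (Z). -/
lemma ident_Z (n : ℕ) :
    zigzagCount (n + 1) = zigzagCount n + (∑ k ∈ Finset.Icc 2 (n + 1), zb (k - 1) * zigzagCount (n + 1 - k))
      + ∑ q ∈ pairT n, zb (q.1 - 1) * (zb (q.2 - q.1) * zigzagCount (n + 1 - q.2)) := by
  haveI : Finite {A : Arcs // IsZigzag (n + 1) A} := fin_zig _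
  have hpart := card_partition (IsZigzag (n + 1)) fil1
    (insert (∅ : Arcs) (sing n ∪ pairs n)) (fun A hA => fil1_mem hA)
  rw [zigzagCount, hpart, Finset.sum_insert (empty_not_mem n),
    Finset.sum_union (sing_pairs_disj n), sing, Finset.sum_image (sing_inj n),
    pairs, Finset.sum_image (pair_inj n)]
  have h0 : Nat.card {A : Arcs // IsZigzag (n + 1) A ∧ fil1 A = ∅} = zigzagCount n := by
    rw [eq0 n]; rfl
  have h1 : ∑ k ∈ Finset.Icc 2 (n + 1),
      Nat.card {A : Arcs // IsZigzag (n + 1) A ∧ fil1 A = {(1, k)}}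
      = ∑ k ∈ Finset.Icc 2 (n + 1), zb (k - 1) * zigzagCount (n + 1 - k) := by
    apply Finset.sum_congr rfl
    intro k hk
    obtain ⟨hk2, hkn⟩ := Finset.mem_Icc.1 hk
    rw [eq1 n k hk2 hkn, Nat.card_prod]
    rfl
  have h2 : ∑ q ∈ pairT n,
      Nat.card {A : Arcs // IsZigzag (n + 1) A ∧ fil1 A = {(1, q.1), (1, q.2)}}
      = ∑ q ∈ pairT n, zb (q.1 - 1) * (zb (q.2 - q.1) * zigzagCount (n + 1 - q.2)) := by
    apply Finset.sum_congr rfl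
    intro q hq
    have hq' := Finset.mem_filter.1 hq
    obtain ⟨hq1, hq2⟩ := Finset.mem_product.1 hq'.1
    rw [eq2 n q.1 q.2 (Finset.mem_Icc.1 hq1).1 hq'.2 (Finset.mem_Icc.1 hq2).2,
      Nat.card_prod, Nat.card_prod]
    rfl
  rw [h0, h1, h2]
  omega

/-- Identity (G). -/
lemma ident_G (n : ℕ) :
    zb (n + 1) = zigzagCount n + ∑ k ∈ Finset.Icc 2 (n + 1), zb (k - 1) * zigzagCount (n + 1 - k) := by
  have hstart : zb (n + 1) = Nat.card {A : Arcs // IsZigzag (n + 1) A ∧ rd A 1 ≤ 1} :=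
    (zb_eq_gcl (n + 1)).symm
  rw [hstart]
  haveI : Finite {A : Arcs // IsZigzag (n + 1) A ∧ rd A 1 ≤ 1} :=
    finite_class (n + 1) _ (fun A hA => hA.1.1.1)
  have hmem : ∀ A : Arcs, (IsZigzag (n + 1) A ∧ rd A 1 ≤ 1) →
      fil1 A ∈ insert (∅ : Arcs) (sing n) := by
    intro A ⟨hA, hrd⟩
    have hcb : (fil1 A).card ≤ 1 := by
      have : rd A 1 = (fil1 A).card := rfl
      omega
    interval_cases h : (fil1 A).card
    · exact Finset.mem_insert.2 (Or.inl (Finset.card_eq_zero.1 h))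
    · exact Finset.mem_insert.2 (Or.inr (fil1_mem_sing hA h))
  have hpart := card_partition (fun A => IsZigzag (n + 1) A ∧ rd A 1 ≤ 1) fil1
    (insert (∅ : Arcs) (sing n)) hmem
  have hfib : ∀ i : Arcs, i.card ≤ 1 →
      Nat.card {A : Arcs // (IsZigzag (n + 1) A ∧ rd A 1 ≤ 1) ∧ fil1 A = i}
        = Nat.card {A : Arcs // IsZigzag (n + 1) A ∧ fil1 A = i} := by
    intro i hi
    apply Nat.card_congr
    apply Equiv.subtypeEquivRight
    intro A
    constructor
    · rintro ⟨⟨h1, _⟩, h2⟩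
      exact ⟨h1, h2⟩
    · rintro ⟨h1, h2⟩
      refine ⟨⟨h1, ?_⟩, h2⟩
      have : rd A 1 = (fil1 A).card := rfl
      rw [this, h2]
      exact hi
  have hemp : (∅ : Arcs) ∉ sing n := by
    intro hc
    obtain ⟨k, _, hk⟩ := Finset.mem_image.1 hc
    exact (Finset.singleton_ne_empty _) hk
  rw [hpart, Finset.sum_insert hemp]
  have h0 : Nat.card {A : Arcs // (IsZigzag (n + 1) A ∧ rd A 1 ≤ 1) ∧ fil1 A = ∅} = zigzagCount n := by
    rw [hfib ∅ (by simp), eq0 n]; rfl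
  have h1 : ∑ i ∈ sing n,
      Nat.card {A : Arcs // (IsZigzag (n + 1) A ∧ rd A 1 ≤ 1) ∧ fil1 A = i}
      = ∑ k ∈ Finset.Icc 2 (n + 1), zb (k - 1) * zigzagCount (n + 1 - k) := by
    rw [sing, Finset.sum_image (sing_inj n)]
    apply Finset.sum_congr rfl
    intro k hk
    obtain ⟨hk2, hkn⟩ := Finset.mem_Icc.1 hk
    rw [hfib {(1, k)} (by simp), eq1 n k hk2 hkn, Nat.card_prod]
    rfl
  rw [h0, h1]

/-! ## Layer 8 : power series -/

lemma zigzag_empty (n : ℕ) : IsZigzag n (∅ : Arcs) := by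
  refine ⟨⟨fun p hp => by simp at hp, fun p hp => by simp at hp⟩, ?_, ?_⟩ <;>
    intro v <;> simp [deg, ld, rd]

lemma zc_zero : zigzagCount 0 = 1 := by
  rw [zigzagCount, Nat.card_eq_one_iff_unique]
  refine ⟨⟨fun a b => Subtype.ext ?_⟩, ⟨⟨∅, zigzag_empty 0⟩⟩⟩
  have h : ∀ y : {A : Arcs // IsZigzag 0 A}, y.1 = ∅ := by
    rintro ⟨A, hA⟩
    apply Finset.eq_empty_of_forall_notMem
    intro p hp
    have := mem_bounds hA hp
    omega
  rw [h a, h b]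

lemma zb_zero : zb 0 = 1 := by
  rw [zb, Nat.card_eq_one_iff_unique]
  refine ⟨⟨fun a b => Subtype.ext ?_⟩, ⟨⟨∅, zigzag_empty 0, by simp [ld]⟩⟩⟩
  have h : ∀ y : {A : Arcs // IsZB 0 A}, y.1 = ∅ := by
    rintro ⟨A, hA, -⟩
    apply Finset.eq_empty_of_forall_notMem
    intro p hp
    have := mem_bounds hA hp
    omega
  rw [h a, h b]

/-- reindexing an Icc sum as an antidiagonal sum. -/
lemma anti_to_icc (n : ℕ) (f : ℕ → ℕ → ℚ) :
    ∑ ab ∈ Finset.HasAntidiagonal.antidiagonal n, f ab.1 ab.2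
      = f 0 n + ∑ k ∈ Finset.Icc 2 (n + 1), f (k - 1) (n + 1 - k) := by
  rw [Finset.Nat.sum_antidiagonal_eq_sum_range_succ_mk, Finset.sum_range_succ', Nat.sub_zero,
    add_comm]
  congr 1
  symm
  refine Finset.sum_nbij' (fun k => k - 2) (fun i => i + 2) ?_ ?_ ?_ ?_ ?_
  · intro k hk
    obtain ⟨h2, hn⟩ := Finset.mem_Icc.1 hk
    rw [Finset.mem_range]
    omega
  · intro i hi
    rw [Finset.mem_range] at hi
    rw [Finset.mem_Icc]
    omega
  · intro k hk
    obtain ⟨h2, hn⟩ := Finset.mem_Icc.1 hk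
    omega
  · intro i hi
    omega
  · intro k hk
    obtain ⟨h2, hn⟩ := Finset.mem_Icc.1 hk
    dsimp only
    congr 1 <;> omega

noncomputable def g0 (m : ℕ) : ℚ := (zb m : ℚ) - if m = 0 then 1 else 0

lemma g0_succ (m : ℕ) : g0 (m + 1) = (zb (m + 1) : ℚ) := by simp [g0]

lemma g0_zero : g0 0 = 0 := by simp [g0, zb_zero]

/-- the ℚ-version of identity (G). -/
lemma qident_G (n : ℕ) :
    (zb (n + 1) : ℚ) = ∑ ab ∈ Finset.HasAntidiagonal.antidiagonal n, (zb ab.1 : ℚ) * (zigzagCount ab.2 : ℚ) := by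
  rw [anti_to_icc n (fun a b => (zb a : ℚ) * (zigzagCount b : ℚ))]
  rw [zb_zero]
  have := ident_G n
  push_cast [this]
  ring

/-- the ℚ-version of the pair sum. -/
lemma qpair (n : ℕ) :
    ((∑ q ∈ pairT n, zb (q.1 - 1) * (zb (q.2 - q.1) * zigzagCount (n + 1 - q.2)) : ℕ) : ℚ)
      = ∑ ab ∈ Finset.HasAntidiagonal.antidiagonal n,
          (∑ uv ∈ Finset.HasAntidiagonal.antidiagonal ab.1, g0 uv.1 * g0 uv.2) * (zigzagCount ab.2 : ℚ) := by
  have hinner : ∀ a : ℕ, (∑ uv ∈ Finset.HasAntidiagonal.antidiagonal a, g0 uv.1 * g0 uv.2)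
      = ∑ uv ∈ (Finset.HasAntidiagonal.antidiagonal a).filter (fun uv => 1 ≤ uv.1 ∧ 1 ≤ uv.2),
          (zb uv.1 : ℚ) * (zb uv.2 : ℚ) := by
    intro a
    rw [Finset.sum_filter]
    apply Finset.sum_congr rfl
    intro uv _
    by_cases h1 : uv.1 = 0
    · rw [h1, g0_zero]
      simp
    · by_cases h2 : uv.2 = 0
      · rw [h2, g0_zero]
        simp [h1]
      · rw [if_pos ⟨by omega, by omega⟩]
        unfold g0
        rw [if_neg h1, if_neg h2]
        ring
  simp_rw [hinner, Finset.sum_mul]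
  rw [Finset.sum_sigma']
  push_cast
  refine Finset.sum_nbij' (fun q => ⟨(q.2 - 1, n + 1 - q.2), (q.1 - 1, q.2 - q.1)⟩)
    (fun s => (s.2.1 + 1, s.1.1 + 1)) ?_ ?_ ?_ ?_ ?_
  · intro q hq
    have hq' := Finset.mem_filter.1 hq
    obtain ⟨hq1, hq2⟩ := Finset.mem_product.1 hq'.1
    have h1 := Finset.mem_Icc.1 hq1
    have h2 := Finset.mem_Icc.1 hq2
    have hlt := hq'.2
    simp only [Finset.mem_sigma, Finset.HasAntidiagonal.mem_antidiagonal, Finset.mem_filter]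
    refine ⟨by omega, ⟨by omega, by omega, by omega⟩⟩
  · rintro ⟨⟨a, b⟩, u, v⟩ hs
    rw [Finset.mem_sigma] at hs
    obtain ⟨hab, huv⟩ := hs
    dsimp only at hab huv ⊢
    rw [Finset.HasAntidiagonal.mem_antidiagonal] at hab
    rw [Finset.mem_filter, Finset.HasAntidiagonal.mem_antidiagonal] at huv
    obtain ⟨he, h1, h2⟩ := huv
    rw [pairT, Finset.mem_filter, Finset.mem_product, Finset.mem_Icc, Finset.mem_Icc]
    dsimp only
    refine ⟨⟨⟨by omega, by omega⟩, ⟨by omega, by omega⟩⟩, by omega⟩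
  · intro q hq
    have hq' := Finset.mem_filter.1 hq
    obtain ⟨hq1, hq2⟩ := Finset.mem_product.1 hq'.1
    have h1 := Finset.mem_Icc.1 hq1
    have h2 := Finset.mem_Icc.1 hq2
    have hlt := hq'.2
    simp only [Prod.ext_iff]
    constructor <;> omega
  · rintro ⟨⟨a, b⟩, u, v⟩ hs
    rw [Finset.mem_sigma] at hs
    obtain ⟨hab, huv⟩ := hs
    dsimp only at hab huv ⊢
    rw [Finset.HasAntidiagonal.mem_antidiagonal] at hab
    rw [Finset.mem_filter, Finset.HasAntidiagonal.mem_antidiagonal] at huv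
    obtain ⟨he, h1, h2⟩ := huv
    refine Sigma.ext ?_ ?_ <;> dsimp only
    · simp only [Prod.ext_iff]
      constructor <;> omega
    · simp only [heq_eq_eq, Prod.ext_iff]
      constructor <;> omega
  · intro q hq
    have hq' := Finset.mem_filter.1 hq
    obtain ⟨hq1, hq2⟩ := Finset.mem_product.1 hq'.1
    have h1 := Finset.mem_Icc.1 hq1
    have h2 := Finset.mem_Icc.1 hq2
    simp only
    ring

/-- the ℚ-version of identity (Z). -/
lemma qident_Z (n : ℕ) :
    (zigzagCount (n + 1) : ℚ) = (∑ ab ∈ Finset.HasAntidiagonal.antidiagonal n, (zb ab.1 : ℚ) * (zigzagCount ab.2 : ℚ))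
      + ∑ ab ∈ Finset.HasAntidiagonal.antidiagonal n,
          (∑ uv ∈ Finset.HasAntidiagonal.antidiagonal ab.1, g0 uv.1 * g0 uv.2) * (zigzagCount ab.2 : ℚ) := by
  rw [anti_to_icc n (fun a b => (zb a : ℚ) * (zigzagCount b : ℚ)), ← qpair n, zb_zero]
  have := ident_Z n
  push_cast [this]
  ring

/-! ## Layer 9 : power series equations -/

noncomputable def Gq : PowerSeries ℚ := PowerSeries.mk fun n => (zb n : ℚ)

open PowerSeries in
lemma PS_G : Gq = 1 + X * (Gq * Zgf) := by
  ext n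
  cases n with
  | zero =>
    simp [Gq, coeff_zero_eq_constantCoeff, map_mul, zb_zero]
  | succ n =>
    rw [map_add, coeff_one, coeff_succ_X_mul, coeff_mul]
    simp only [Gq, Zgf, coeff_mk]
    rw [if_neg (Nat.succ_ne_zero n), zero_add]
    exact qident_G n

open PowerSeries in
lemma PS_Z : Zgf = 1 + X * (Gq * Zgf) + X * (((Gq - 1) * (Gq - 1)) * Zgf) := by
  ext n
  cases n with
  | zero =>
    simp [Zgf, coeff_zero_eq_constantCoeff, map_mul, zc_zero]
  | succ n =>
    have hco : ∀ m : ℕ, (coeff m) (Gq - 1) = g0 m := by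
      intro m
      rw [map_sub, coeff_one]
      simp only [Gq, coeff_mk, g0]
    have hcc : ∀ a : ℕ, (coeff a) ((Gq - 1) * (Gq - 1))
        = ∑ uv ∈ Finset.HasAntidiagonal.antidiagonal a, g0 uv.1 * g0 uv.2 := by
      intro a
      rw [coeff_mul]
      exact Finset.sum_congr rfl (fun uv _ => by rw [hco, hco])
    rw [map_add, map_add, coeff_one, coeff_succ_X_mul, coeff_succ_X_mul, coeff_mul, coeff_mul]
    simp only [hcc]
    simp only [Zgf, Gq, coeff_mk]
    rw [if_neg (Nat.succ_ne_zero n), zero_add]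
    exact qident_Z n

open PowerSeries in
lemma final_cubic :
    X ^ 2 * (X - 1) * Zgf ^ 3 + 2 * X * Zgf ^ 2 - (X + 1) * Zgf + 1 = 0 := by
  have hG := PS_G
  have hZ := PS_Z
  have hGu : (1 - X * Zgf) * Gq = 1 := by linear_combination hG
  have hZ2 : Zgf = Gq + X ^ 3 * Gq ^ 2 * Zgf ^ 3 := by
    linear_combination hZ + (X * Zgf * (Gq - 1 + X * Gq * Zgf) - 1) * hG
  linear_combination (-(1 - X * Zgf) ^ 2) * hZ2 +
    (-((1 - X * Zgf) + X ^ 3 * Zgf ^ 3 * ((1 - X * Zgf) * Gq + 1))) * hGu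

/-- `x²(x−1)Z³ + 2xZ² − (x+1)Z + 1 = 0` as formal power series. -/
theorem zigzag_gf_equation :
    Xq ^ 2 * (Xq - 1) * Zgf ^ 3 + 2 * Xq * Zgf ^ 2 - (Xq + 1) * Zgf + 1 = 0 := by
  unfold Xq
  exact final_cubic
end Paper
end

section
/- Fix an integer m ≥ 2. For every n ≥ 0, z_m(n) = r_m(n+m−1); equivalently, as formal power series, R_m(x) = 1 + x + x² + ⋯ + x^{m−2} + x^{m−1}·Z_m(x). In particular r_m(n) = 1 for 0 ≤ n ≤ m−1. -/
open PowerSeries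

namespace Paper

/-! ### Auxiliary development for Statement 9 -/

/-- The inverse of the reduction map: replace each arc `(i,j)` by `(i, j+m-1)`. -/
def phiMap (m : ℕ) (A : Arcs) : Arcs := A.image fun p => (p.1, p.2 + m - 1)

lemma ld_pos_iff (A : Arcs) (v : ℕ) : 0 < ld A v ↔ ∃ p ∈ A, p.2 = v := by
  simp [ld, Finset.card_pos, Finset.filter_nonempty_iff]

lemma rd_pos_iff (A : Arcs) (v : ℕ) : 0 < rd A v ↔ ∃ p ∈ A, p.1 = v := by
  simp [rd, Finset.card_pos, Finset.filter_nonempty_iff]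

lemma rd_eq_zero_of_ge {n v : ℕ} {A : Arcs} (hA : IsDiagram n A) (hv : n ≤ v) :
    rd A v = 0 := by
  rw [rd, Finset.card_eq_zero, Finset.filter_eq_empty_iff]
  intro p hp
  have := hA p hp
  omega

/-- Key lemma: in an `m`-regular linear stack, a vertex `x` with positive left-degree
and a vertex `y < x` with positive right-degree and `x ≤ y + m - 1` force a crossing. -/
lemma reg_no_ld_rd {m n : ℕ} {A : Arcs} (hm : 2 ≤ m) (h : RegLinear m n A)
    {x y : ℕ} (hyx : y < x) (hx : x ≤ y + m - 1)
    (hl : 0 < ld A x) (hr : 0 < rd A y) : False := by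
  obtain ⟨p, hp, hp2⟩ := (ld_pos_iff A x).1 hl
  obtain ⟨q, hq, hq1⟩ := (rd_pos_iff A y).1 hr
  have hlenp := h.2.1 p hp
  have hlenq := h.2.1 q hq
  exact h.1.2 p hp q hq ⟨by omega, by omega, by omega⟩

lemma phiMap_inj {m : ℕ} (hm : 2 ≤ m) :
    Function.Injective (fun p : ℕ × ℕ => (p.1, p.2 + m - 1)) := by
  intro a b hab
  simp only [Prod.mk.injEq] at hab
  have : a.1 = b.1 ∧ a.2 = b.2 := by omega
  exact Prod.ext this.1 this.2

lemma rd_phiMap {m : ℕ} (hm : 2 ≤ m) (A : Arcs) (v : ℕ) :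
    rd (phiMap m A) v = rd A v := by
  unfold rd phiMap
  rw [Finset.filter_image, Finset.card_image_of_injective _ (phiMap_inj hm)]

lemma ld_phiMap_card {m : ℕ} (hm : 2 ≤ m) (A : Arcs) (v : ℕ) :
    ld (phiMap m A) v = (A.filter fun p => p.2 + m - 1 = v).card := by
  unfold ld phiMap
  rw [Finset.filter_image, Finset.card_image_of_injective _ (phiMap_inj hm)]

lemma theta_injOn {m : ℕ} (hm : 2 ≤ m) {A : Arcs} (h : ∀ p ∈ A, m + 1 ≤ p.2) :
    Set.InjOn (fun p : ℕ × ℕ => (p.1, p.2 - m + 1)) A := by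
  intro a ha b hb hab
  simp only [Prod.mk.injEq] at hab
  have ha2 := h a ha
  have hb2 := h b hb
  have : a.1 = b.1 ∧ a.2 = b.2 := by omega
  exact Prod.ext this.1 this.2

lemma rd_theta {m : ℕ} (hm : 2 ≤ m) {A : Arcs} (h : ∀ p ∈ A, m + 1 ≤ p.2) (v : ℕ) :
    rd (theta m A) v = rd A v := by
  unfold rd theta
  rw [Finset.filter_image,
    Finset.card_image_of_injOn ((theta_injOn hm h).mono
      (Finset.coe_subset.2 (Finset.filter_subset _ _)))]

lemma ld_theta {m : ℕ} (hm : 2 ≤ m) {A : Arcs} (h : ∀ p ∈ A, m + 1 ≤ p.2) (v : ℕ) :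
    ld (theta m A) v = ld A (v + m - 1) := by
  unfold ld theta
  rw [Finset.filter_image,
    Finset.card_image_of_injOn ((theta_injOn hm h).mono
      (Finset.coe_subset.2 (Finset.filter_subset _ _)))]
  congr 1
  apply Finset.filter_congr
  intro p hp
  have := h p hp
  constructor <;> intro <;> simp_all <;> omega

lemma phiMap_mred {m n : ℕ} (hm : 2 ≤ m) {B : Arcs} (hB : MRed m n B) :
    RegLinear m (n + m - 1) (phiMap m B) := by
  obtain ⟨⟨⟨hdiag, hcross⟩, hdeg, hzig⟩, h1, h2⟩ := hB
  refine ⟨⟨?_, ?_⟩, ?_, ?_⟩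
  · -- diagram
    intro q hq
    obtain ⟨p, hp, rfl⟩ := Finset.mem_image.1 hq
    have := hdiag p hp
    refine ⟨by omega, by simp; omega, by simp; omega⟩
  · -- non-crossing
    intro q1 hq1 q2 hq2 hc
    obtain ⟨p1, hp1, rfl⟩ := Finset.mem_image.1 hq1
    obtain ⟨p2, hp2, rfl⟩ := Finset.mem_image.1 hq2
    obtain ⟨c1, c2, c3⟩ := hc
    simp only at c1 c2 c3
    have d1 := hdiag p1 hp1
    have d2 := hdiag p2 hp2
    have hld : 0 < ld B p1.2 := (ld_pos_iff B p1.2).2 ⟨p1, hp1, rfl⟩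
    rcases lt_trichotomy p2.1 p1.2 with h | h | h
    · exact hcross p1 hp1 p2 hp2 ⟨c1, h, by omega⟩
    · exact hzig p1.2 ⟨hld, (rd_pos_iff B p1.2).2 ⟨p2, hp2, h⟩⟩
    · have hrd : 0 < rd B p2.1 := (rd_pos_iff B p2.1).2 ⟨p2, hp2, rfl⟩
      have := h2 p1.2 p2.1 (by omega) h (by omega) hld hrd
      omega
  · -- arc length
    intro q hq
    obtain ⟨p, hp, rfl⟩ := Finset.mem_image.1 hq
    have := hdiag p hp
    simp
    omega
  · -- degree bound
    intro v
    rw [deg, rd_phiMap hm, ld_phiMap_card hm]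
    by_cases hne : (B.filter fun p => p.2 + m - 1 = v).Nonempty
    · obtain ⟨p, hp⟩ := hne
      rw [Finset.mem_filter] at hp
      obtain ⟨hp1, hp2⟩ := hp
      have hd := hdiag p hp1
      have hfe : (B.filter fun q => q.2 + m - 1 = v) = B.filter fun q => q.2 = p.2 := by
        apply Finset.filter_congr
        intro q hq
        constructor <;> intro <;> simp_all <;> omega
      rw [hfe]
      by_cases hv : v ≤ n
      · have := h1 p.2 (by omega) (by omega)
        have hpe : p.2 + m - 1 = v := hp2
        rw [hpe] at this
        exact this
      · rw [rd_eq_zero_of_ge hdiag (by omega)]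
        have := hdeg p.2
        rw [deg] at this
        show (B.filter fun q => q.2 = p.2).card + 0 ≤ 2
        have hld : ld B p.2 = (B.filter fun q => q.2 = p.2).card := rfl
        omega
    · rw [Finset.not_nonempty_iff_eq_empty] at hne
      rw [hne]
      simp only [Finset.card_empty, zero_add]
      have := hdeg v
      rw [deg] at this
      omega

lemma theta_reg {m n : ℕ} (hm : 2 ≤ m) {A : Arcs} (hA : RegLinear m (n + m - 1) A) :
    MRed m n (theta m A) := by
  obtain ⟨⟨hdiag, hcross⟩, hlen, hdeg⟩ := hA
  have hbig : ∀ p ∈ A, m + 1 ≤ p.2 := by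
    intro p hp
    have := hdiag p hp
    have := hlen p hp
    omega
  have hld := ld_theta hm hbig
  have hrd := rd_theta hm hbig
  have hA' : RegLinear m (n + m - 1) A := ⟨⟨hdiag, hcross⟩, hlen, hdeg⟩
  refine ⟨⟨⟨?_, ?_⟩, ?_, ?_⟩, ?_, ?_⟩
  · -- diagram
    intro q hq
    obtain ⟨p, hp, rfl⟩ := Finset.mem_image.1 hq
    have := hdiag p hp
    have := hlen p hp
    refine ⟨by omega, by simp; omega, by simp; omega⟩
  · -- non-crossing
    intro q1 hq1 q2 hq2 hc
    obtain ⟨p1, hp1, rfl⟩ := Finset.mem_image.1 hq1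
    obtain ⟨p2, hp2, rfl⟩ := Finset.mem_image.1 hq2
    obtain ⟨c1, c2, c3⟩ := hc
    simp only at c1 c2 c3
    have e1 := hbig p1 hp1
    have e2 := hbig p2 hp2
    exact hcross p1 hp1 p2 hp2 ⟨c1, by omega, by omega⟩
  · -- degree bound
    intro v
    rw [deg, hld, hrd]
    rcases Nat.eq_zero_or_pos (rd A v) with h | h
    · have := hdeg (v + m - 1)
      rw [deg] at this
      omega
    · have hld0 : ld A (v + m - 1) = 0 := by
        by_contra h'
        exact reg_no_ld_rd hm hA' (show v < v + m - 1 by omega) (by omega)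
          (Nat.pos_of_ne_zero h') h
      have := hdeg v
      rw [deg] at this
      omega
  · -- zigzag condition
    intro v hv
    rw [hld, hrd] at hv
    exact reg_no_ld_rd hm hA' (show v < v + m - 1 by omega) (by omega)
      (by omega) (by omega)
  · -- condition (1)
    intro i hi him
    rw [hld, hrd]
    have := hdeg (i + m - 1)
    rw [deg] at this
    exact this
  · -- condition (2)
    intro i j hi hij hjn hldi hrdj
    rw [hld] at hldi
    rw [hrd] at hrdj
    by_contra hcon
    exact reg_no_ld_rd hm hA' (show j < i + m - 1 by omega) (by omega) hldi hrdj

lemma theta_phiMap {m n : ℕ} (hm : 2 ≤ m) {B : Arcs} (hB : IsDiagram n B) :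
    theta m (phiMap m B) = B := by
  unfold theta phiMap
  rw [Finset.image_image]
  refine (Finset.image_congr ?_).trans Finset.image_id
  intro p hp
  have := hB p hp
  obtain ⟨a, b⟩ := p
  simp only [Function.comp_apply, id_eq, Prod.mk.injEq] at *
  exact ⟨trivial, by omega⟩

lemma phiMap_theta {m : ℕ} (hm : 2 ≤ m) {A : Arcs} (h : ∀ p ∈ A, m ≤ p.2) :
    phiMap m (theta m A) = A := by
  unfold theta phiMap
  rw [Finset.image_image]
  refine (Finset.image_congr ?_).trans Finset.image_id
  intro p hp
  have := h p hp
  obtain ⟨a, b⟩ := p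
  simp only [Function.comp_apply, id_eq, Prod.mk.injEq] at *
  exact ⟨trivial, by omega⟩

lemma zm_eq_rmc {m : ℕ} (hm : 2 ≤ m) (n : ℕ) : zm m n = rmc m (n + m - 1) := by
  apply Nat.card_congr
  refine ⟨fun A => ⟨phiMap m A.1, phiMap_mred hm A.2⟩,
    fun A => ⟨theta m A.1, theta_reg hm A.2⟩, ?_, ?_⟩
  · intro ⟨A, hA⟩
    exact Subtype.ext (theta_phiMap hm hA.1.1.1)
  · intro ⟨A, hA⟩
    apply Subtype.ext
    apply phiMap_theta hm
    intro p hp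
    have := hA.1.1 p hp
    have := hA.2.1 p hp
    omega

lemma regLinear_empty (m n : ℕ) : RegLinear m n (∅ : Arcs) := by
  refine ⟨⟨?_, ?_⟩, ?_, ?_⟩ <;> simp [IsDiagram, deg, ld, rd]

lemma rmc_one {m n : ℕ} (hm : 2 ≤ m) (hn : n + 1 ≤ m) : rmc m n = 1 := by
  have hempty : ∀ A : Arcs, RegLinear m n A → A = ∅ := by
    intro A hA
    apply Finset.eq_empty_of_forall_notMem
    intro p hp
    have := hA.1.1 p hp
    have := hA.2.1 p hp
    omega
  haveI : Unique {A : Arcs // RegLinear m n A} :=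
    { default := ⟨∅, regLinear_empty m n⟩
      uniq := fun A => Subtype.ext (hempty A.1 A.2) }
  exact Nat.card_unique

/-- `z_m(n) = r_m(n+m−1)` for all `n`; equivalently
`R_m(x) = 1 + x + ⋯ + x^{m−2} + x^{m−1} Z_m(x)`; in particular `r_m(n) = 1` for `n ≤ m−1`. -/
theorem zm_eq_rm_shift (m : ℕ) (hm : 2 ≤ m) :
    (∀ n : ℕ, zm m n = rmc m (n + m - 1)) ∧
    Rm m = (∑ k ∈ Finset.range (m - 1), Xq ^ k) + Xq ^ (m - 1) * Zm m ∧
    (∀ n : ℕ, n + 1 ≤ m → rmc m n = 1) := by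
  refine ⟨fun n => zm_eq_rmc hm n, ?_, fun n hn => rmc_one hm hn⟩
  ext n
  rw [map_add, map_sum]
  simp only [Xq, PowerSeries.coeff_X_pow, PowerSeries.coeff_X_pow_mul', Rm, Zm,
    PowerSeries.coeff_mk, Finset.sum_ite_eq, Finset.mem_range]
  by_cases h : m - 1 ≤ n
  · rw [if_neg (by omega), if_pos h]
    have := zm_eq_rmc hm (n - (m - 1))
    rw [show n - (m - 1) + m - 1 = n by omega] at this
    rw [this]
    ring
  · rw [if_pos (by omega), if_neg h]
    rw [rmc_one hm (by omega)]
    norm_num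
end Paper
end
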